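/- arXiv:1908.04106 — 7 statements merged into one kernel-verified Lean document; each statement's English description precedes it below -/
import Mathlib

section
/- (Theorem 2.2, optimality part.) Let K : T × T → ℝ be a symmetric measurable kernel whose associated quadratic form is nonnegative on finite signed measures, and let f : T → ℝ^m be bounded measurable. Suppose: (i) there is an m-tuple G = (G₁,…,G_m) of finite signed measures on T and an m×m matrix D such that ∫_T f_i(t) G_j(dt) = δ_{ij} for all i,j and ∫_T K(t,s) G(dt) = D f(s) for all s ∈ T; (ii) there is a finite signed measure ζ_ν on T with ∫_T K(t,s) ζ_ν(dt) = ∫_S K(s,u) ν(du) for all s ∈ T. Define c = ∫_S f(s) ν(ds) − ∫_T f(t) ζ_ν(dt) ∈ ℝ^m and Q* = ζ_ν + Σ_{j=1}^m c_j G_j. Then for every finite signed measure Q on T satisfying ∫_T f(t) Q(dt) = ∫_S f(s) ν(ds), one has M(Q) ≥ M(Q*), where M(Q) = ∬_{S×S} K dν dν − 2 ∬_{S×T} K(t,s) ν(dt) Q(ds) + ∬_{T×T} K(t,s) Q(dt) Q(ds). -/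
open MeasureTheory

/-- Integral of a real function against a finite signed measure, via the Jordan
decomposition. -/
noncomputable def sInt {α : Type*} [MeasurableSpace α] (μ : SignedMeasure α) (g : α → ℝ) : ℝ :=
  (∫ x, g x ∂μ.toJordanDecomposition.posPart) - ∫ x, g x ∂μ.toJordanDecomposition.negPart

namespace BlupAux

open Function MeasureTheory

variable {α β : Type*} [MeasurableSpace α] [MeasurableSpace β]

lemma integrable_of_bdd {μ : Measure α} [IsFiniteMeasure μ] {g : α → ℝ}
    (hg : Measurable g) {C : ℝ} (hb : ∀ x, |g x| ≤ C) : Integrable g μ :=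
  (integrable_const C).mono' hg.aestronglyMeasurable
    (Filter.Eventually.of_forall fun x => by simpa [Real.norm_eq_abs] using hb x)

lemma jordan_eq (μ : SignedMeasure α) :
    μ = μ.toJordanDecomposition.posPart.toSignedMeasure -
        μ.toJordanDecomposition.negPart.toSignedMeasure := by
  conv_lhs => rw [← μ.toSignedMeasure_toJordanDecomposition]
  rfl

lemma measure_add_eq {P N P' N' : Measure α} [IsFiniteMeasure P] [IsFiniteMeasure N]
    [IsFiniteMeasure P'] [IsFiniteMeasure N']
    (h : P.toSignedMeasure - N.toSignedMeasure = P'.toSignedMeasure - N'.toSignedMeasure) :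
    P + N' = P' + N := by
  ext s hs
  have h1 := congrArg (fun v : SignedMeasure α => v s) h
  simp only [VectorMeasure.sub_apply, Measure.toSignedMeasure_apply_measurable hs] at h1
  have h2 : ((P + N') s).toReal = ((P' + N) s).toReal := by
    rw [Measure.add_apply, Measure.add_apply,
      ENNReal.toReal_add (measure_ne_top _ _) (measure_ne_top _ _),
      ENNReal.toReal_add (measure_ne_top _ _) (measure_ne_top _ _)]
    simp only [measureReal_def] at h1
    linarith
  exact (ENNReal.toReal_eq_toReal_iff' (measure_ne_top _ _) (measure_ne_top _ _)).1 h2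

lemma sInt_eq {μ : SignedMeasure α} {P N : Measure α} [IsFiniteMeasure P] [IsFiniteMeasure N]
    (h : μ = P.toSignedMeasure - N.toSignedMeasure) {g : α → ℝ}
    (hg : Measurable g) {C : ℝ} (hb : ∀ x, |g x| ≤ C) :
    sInt μ g = (∫ x, g x ∂P) - ∫ x, g x ∂N := by
  have hEq : μ.toJordanDecomposition.posPart + N = P + μ.toJordanDecomposition.negPart :=
    measure_add_eq (by rw [← jordan_eq, h])
  have h2 := congrArg (fun ρ : Measure α => ∫ x, g x ∂ρ) hEq
  rw [integral_add_measure (integrable_of_bdd hg hb) (integrable_of_bdd hg hb),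
      integral_add_measure (integrable_of_bdd hg hb) (integrable_of_bdd hg hb)] at h2
  unfold sInt
  linarith

lemma sInt_add (μ ν : SignedMeasure α) {g : α → ℝ} (hg : Measurable g) {C : ℝ}
    (hb : ∀ x, |g x| ≤ C) : sInt (μ + ν) g = sInt μ g + sInt ν g := by
  have h : μ + ν =
      (μ.toJordanDecomposition.posPart + ν.toJordanDecomposition.posPart).toSignedMeasure -
      (μ.toJordanDecomposition.negPart + ν.toJordanDecomposition.negPart).toSignedMeasure := by
    rw [Measure.toSignedMeasure_add, Measure.toSignedMeasure_add]
    conv_lhs => rw [jordan_eq μ, jordan_eq ν]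
    abel
  rw [sInt_eq h hg hb, sInt_eq (jordan_eq μ) hg hb, sInt_eq (jordan_eq ν) hg hb,
    integral_add_measure (integrable_of_bdd hg hb) (integrable_of_bdd hg hb),
    integral_add_measure (integrable_of_bdd hg hb) (integrable_of_bdd hg hb)]
  ring

lemma sInt_zero {g : α → ℝ} (hg : Measurable g) {C : ℝ} (hb : ∀ x, |g x| ≤ C) :
    sInt (0 : SignedMeasure α) g = 0 := by
  have h : (0 : SignedMeasure α) =
      (0 : Measure α).toSignedMeasure - (0 : Measure α).toSignedMeasure := by simp
  rw [sInt_eq h hg hb]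
  simp

lemma sInt_smul (μ : SignedMeasure α) (r : ℝ) (g : α → ℝ) :
    sInt (r • μ) g = r * sInt μ g := by
  rcases le_or_gt 0 r with hr | hr
  · unfold sInt
    rw [SignedMeasure.toJordanDecomposition_smul_real,
      JordanDecomposition.real_smul_posPart_nonneg _ _ hr,
      JordanDecomposition.real_smul_negPart_nonneg _ _ hr,
      integral_smul_nnreal_measure, integral_smul_nnreal_measure]
    simp only [NNReal.smul_def, Real.coe_toNNReal r hr, smul_eq_mul]
    ring
  · unfold sInt
    rw [SignedMeasure.toJordanDecomposition_smul_real,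
      JordanDecomposition.real_smul_posPart_neg _ _ hr,
      JordanDecomposition.real_smul_negPart_neg _ _ hr,
      integral_smul_nnreal_measure, integral_smul_nnreal_measure]
    simp only [NNReal.smul_def, Real.coe_toNNReal (-r) (by linarith), smul_eq_mul]
    ring

lemma sInt_neg (μ : SignedMeasure α) {g : α → ℝ} (hg : Measurable g) {C : ℝ}
    (hb : ∀ x, |g x| ≤ C) : sInt (-μ) g = -sInt μ g := by
  have h : -μ = μ.toJordanDecomposition.negPart.toSignedMeasure -
      μ.toJordanDecomposition.posPart.toSignedMeasure := by
    conv_lhs => rw [jordan_eq μ]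
    rw [neg_sub]
  rw [sInt_eq h hg hb, sInt_eq (jordan_eq μ) hg hb]
  ring

lemma sInt_sub (μ ν : SignedMeasure α) {g : α → ℝ} (hg : Measurable g) {C : ℝ}
    (hb : ∀ x, |g x| ≤ C) : sInt (μ - ν) g = sInt μ g - sInt ν g := by
  rw [sub_eq_add_neg, sInt_add _ _ hg hb, sInt_neg _ hg hb, sub_eq_add_neg]

lemma sInt_sum {ι : Type*} (s : Finset ι) (μ : ι → SignedMeasure α) {g : α → ℝ}
    (hg : Measurable g) {C : ℝ} (hb : ∀ x, |g x| ≤ C) :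
    sInt (∑ i ∈ s, μ i) g = ∑ i ∈ s, sInt (μ i) g := by
  classical
  induction s using Finset.cons_induction with
  | empty => simpa using sInt_zero hg hb
  | cons i s his ih =>
    rw [Finset.sum_cons, sInt_add _ _ hg hb, ih, Finset.sum_cons]

lemma sInt_congr (μ : SignedMeasure α) {g h : α → ℝ} (hgh : ∀ x, g x = h x) :
    sInt μ g = sInt μ h := by
  have : g = h := funext hgh
  rw [this]

lemma sInt_fun_add (μ : SignedMeasure α) {g h : α → ℝ} (hg : Measurable g) {C : ℝ}
    (hbg : ∀ x, |g x| ≤ C) (hh : Measurable h) {C' : ℝ} (hbh : ∀ x, |h x| ≤ C') :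
    sInt μ (fun x => g x + h x) = sInt μ g + sInt μ h := by
  unfold sInt
  rw [integral_add (integrable_of_bdd hg hbg) (integrable_of_bdd hh hbh),
    integral_add (integrable_of_bdd hg hbg) (integrable_of_bdd hh hbh)]
  ring

lemma sInt_fun_mul (μ : SignedMeasure α) (r : ℝ) (g : α → ℝ) :
    sInt μ (fun x => r * g x) = r * sInt μ g := by
  unfold sInt
  rw [integral_const_mul, integral_const_mul]
  ring

lemma sInt_fun_sum {ι : Type*} (s : Finset ι) (μ : SignedMeasure α) (g : ι → α → ℝ)
    (hm : ∀ i, Measurable (g i)) (hb : ∀ i, ∃ C, ∀ x, |g i x| ≤ C) :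
    sInt μ (fun x => ∑ i ∈ s, g i x) = ∑ i ∈ s, sInt μ (g i) := by
  unfold sInt
  rw [integral_finset_sum, integral_finset_sum, Finset.sum_sub_distrib]
  all_goals
    intro i _
    obtain ⟨C, hC⟩ := hb i
    exact integrable_of_bdd (hm i) hC

lemma integral_param_meas {k : α → β → ℝ} (hk : Measurable (uncurry k)) (R : Measure β)
    [SFinite R] : Measurable fun t => ∫ s, k t s ∂(R) :=
  (hk.stronglyMeasurable.integral_prod_right').measurable

lemma sInt_param_meas (ρ : SignedMeasure β) {k : α → β → ℝ} (hk : Measurable (uncurry k)) :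
    Measurable fun t => sInt ρ fun s => k t s :=
  (integral_param_meas hk _).sub (integral_param_meas hk _)

lemma abs_integral_le_bound {R : Measure β} [IsFiniteMeasure R] {h : β → ℝ} {C : ℝ}
    (hb : ∀ s, |h s| ≤ C) : |∫ s, h s ∂(R)| ≤ C * (R Set.univ).toReal := by
  rw [← Real.norm_eq_abs]
  exact norm_integral_le_of_norm_le_const
    (Filter.Eventually.of_forall fun s => by rw [Real.norm_eq_abs]; exact hb s)

lemma abs_sub_le_abs_add_abs (a b : ℝ) : |a - b| ≤ |a| + |b| := by
  rw [sub_eq_add_neg]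
  exact (abs_add_le _ _).trans (by rw [abs_neg])

omit [MeasurableSpace α] in
lemma sInt_param_bdd (ρ : SignedMeasure β) {k : α → β → ℝ} {C : ℝ}
    (hb : ∀ t s, |k t s| ≤ C) :
    ∃ C', ∀ t, |sInt ρ fun s => k t s| ≤ C' := by
  refine ⟨C * (ρ.toJordanDecomposition.posPart Set.univ).toReal +
    C * (ρ.toJordanDecomposition.negPart Set.univ).toReal, fun t => ?_⟩
  have h1 : |∫ s, k t s ∂ρ.toJordanDecomposition.posPart| ≤
      C * (ρ.toJordanDecomposition.posPart Set.univ).toReal :=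
    abs_integral_le_bound (fun s => hb t s)
  have h2 : |∫ s, k t s ∂ρ.toJordanDecomposition.negPart| ≤
      C * (ρ.toJordanDecomposition.negPart Set.univ).toReal :=
    abs_integral_le_bound (fun s => hb t s)
  exact (abs_sub_le_abs_add_abs _ _).trans (by linarith)

lemma sInt_swap (μ : SignedMeasure α) (ρ : SignedMeasure β) (k : α → β → ℝ)
    (hk : Measurable (uncurry k)) {C : ℝ} (hb : ∀ t s, |k t s| ≤ C) :
    sInt μ (fun t => sInt ρ fun s => k t s) = sInt ρ (fun s => sInt μ fun t => k t s) := by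
  have hk' : Measurable (uncurry fun s t => k t s) :=
    hk.comp (measurable_snd.prodMk measurable_fst)
  have swap : ∀ (P : Measure α) (R : Measure β), IsFiniteMeasure P → IsFiniteMeasure R →
      ∫ t, (∫ s, k t s ∂(R)) ∂P = ∫ s, (∫ t, k t s ∂P) ∂(R) := by
    intro P R hP hR
    exact integral_integral_swap (integrable_of_bdd (μ := P.prod R) hk fun p => hb p.1 p.2)
  set Pa := μ.toJordanDecomposition.posPart
  set Na := μ.toJordanDecomposition.negPart
  set Pb := ρ.toJordanDecomposition.posPart
  set Nb := ρ.toJordanDecomposition.negPart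
  have splitA : ∀ (P : Measure α), IsFiniteMeasure P →
      ∫ t, (sInt ρ fun s => k t s) ∂P =
        (∫ t, (∫ s, k t s ∂Pb) ∂P) - ∫ t, (∫ s, k t s ∂Nb) ∂P := by
    intro P hP
    unfold sInt
    exact integral_sub
      (integrable_of_bdd (integral_param_meas hk Pb)
        (fun t => abs_integral_le_bound (fun s => hb t s)))
      (integrable_of_bdd (integral_param_meas hk Nb)
        (fun t => abs_integral_le_bound (fun s => hb t s)))
  have splitB : ∀ (R : Measure β), IsFiniteMeasure R →
      ∫ s, (sInt μ fun t => k t s) ∂(R) =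
        (∫ s, (∫ t, k t s ∂Pa) ∂(R)) - ∫ s, (∫ t, k t s ∂Na) ∂(R) := by
    intro R hR
    unfold sInt
    exact integral_sub
      (integrable_of_bdd (integral_param_meas hk' Pa)
        (fun s => abs_integral_le_bound (fun t => hb t s)))
      (integrable_of_bdd (integral_param_meas hk' Na)
        (fun s => abs_integral_le_bound (fun t => hb t s)))
  show (∫ t, (sInt ρ fun s => k t s) ∂Pa) - (∫ t, (sInt ρ fun s => k t s) ∂Na) =
    (∫ s, (sInt μ fun t => k t s) ∂Pb) - ∫ s, (sInt μ fun t => k t s) ∂Nb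
  rw [splitA Pa inferInstance, splitA Na inferInstance, splitB Pb inferInstance,
    splitB Nb inferInstance, swap Pa Pb inferInstance inferInstance,
    swap Pa Nb inferInstance inferInstance, swap Na Pb inferInstance inferInstance,
    swap Na Nb inferInstance inferInstance]
  ring

end BlupAux


/-- Theorem 2.2, optimality part.  Under Assumption A′, the measure
`Q* = ζ_ν + Σ_j c_j G_j` minimizes the MSE functional `M` among all finite signed
measures `Q` on `T` satisfying the unbiasedness condition `∫_T f dQ = ∫_S f dν`. -/
theorem blup_average_optimality {d m : ℕ}
    (T S : Set (Fin d → ℝ)) (hT : MeasurableSet T) (hS : MeasurableSet S)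
    (K : (Fin d → ℝ) → (Fin d → ℝ) → ℝ)
    (hKmeas : Measurable (Function.uncurry K))
    (hKbd : ∃ C, ∀ t s, |K t s| ≤ C)
    (hKsym : ∀ t s, K t s = K s t)
    -- nonnegativity of the quadratic form on finite signed measures on `T`:
    (hKpos : ∀ R : SignedMeasure T, 0 ≤ sInt R fun t => sInt R fun s => K t.1 s.1)
    (f : (Fin d → ℝ) → Fin m → ℝ)
    (hfmeas : ∀ i, Measurable fun t => f t i)
    (hfbd : ∃ C, ∀ t i, |f t i| ≤ C)
    (ν : SignedMeasure S)
    -- (i) existence of the BLUE measure `G` with matrix `D`: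
    (G : Fin m → SignedMeasure T) (D : Fin m → Fin m → ℝ)
    (hG1 : ∀ i j, sInt (G j) (fun t => f t.1 i) = if i = j then 1 else 0)
    (hG2 : ∀ (s : T) (k : Fin m),
      sInt (G k) (fun t => K t.1 s.1) = ∑ j, D k j * f s.1 j)
    -- (ii) existence of the measure `ζ_ν`:
    (ζν : SignedMeasure T)
    (hζν : ∀ s : T, sInt ζν (fun t => K t.1 s.1) = sInt ν fun u => K s.1 u.1)
    (c : Fin m → ℝ)
    (hc : ∀ i, c i = (sInt ν fun s => f s.1 i) - sInt ζν fun t => f t.1 i)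
    (Qstar : SignedMeasure T)
    (hQstar : Qstar = ζν + ∑ j, c j • G j)
    (M : SignedMeasure T → ℝ)
    (hM : ∀ Q : SignedMeasure T,
      M Q = (sInt ν fun t => sInt ν fun s => K t.1 s.1)
        - 2 * (sInt ν fun t => sInt Q fun s => K t.1 s.1)
        + (sInt Q fun t => sInt Q fun s => K t.1 s.1))
    (Q : SignedMeasure T)
    (hQ : ∀ i, sInt Q (fun t => f t.1 i) = sInt ν fun s => f s.1 i) :
    M Qstar ≤ M Q := by
  classical
  obtain ⟨CK, hCK⟩ := hKbd
  obtain ⟨Cf, hCf⟩ := hfbd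
  -- measurability of the various kernels restricted to the subtypes
  have hkTT : Measurable (Function.uncurry fun (t s : T) => K t.1 s.1) :=
    hKmeas.comp ((measurable_subtype_coe.comp measurable_fst).prodMk
      (measurable_subtype_coe.comp measurable_snd))
  have hkST : Measurable (Function.uncurry fun (t : S) (s : T) => K t.1 s.1) :=
    hKmeas.comp ((measurable_subtype_coe.comp measurable_fst).prodMk
      (measurable_subtype_coe.comp measurable_snd))
  have hfm : ∀ i, Measurable fun t : T => f t.1 i :=
    fun i => (hfmeas i).comp measurable_subtype_coe
  -- the "inner integral" function of a signed measure on T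
  have hFm : ∀ P : SignedMeasure T, Measurable fun t : T => sInt P fun s => K t.1 s.1 :=
    fun P => BlupAux.sInt_param_meas P hkTT
  have hFb : ∀ P : SignedMeasure T, ∃ C, ∀ t : T, |sInt P fun s => K t.1 s.1| ≤ C :=
    fun P => BlupAux.sInt_param_bdd P fun t s => hCK _ _
  -- symmetry of the double integral
  have hswap : ∀ P P' : SignedMeasure T,
      (sInt P fun t => sInt P' fun s => K t.1 s.1)
        = sInt P' fun t => sInt P fun s => K t.1 s.1 := by
    intro P P'
    rw [BlupAux.sInt_swap P P' (fun t s => K t.1 s.1) hkTT fun t s => hCK _ _]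
    exact BlupAux.sInt_congr _ fun t =>
      BlupAux.sInt_congr _ fun s => hKsym _ _
  -- the cross term equals the double integral against ζν
  have hb_eq : ∀ P : SignedMeasure T,
      (sInt ν fun t => sInt P fun s => K t.1 s.1)
        = sInt P fun t => sInt ζν fun s => K t.1 s.1 := by
    intro P
    rw [BlupAux.sInt_swap ν P (fun (t : S) (s : T) => K t.1 s.1) hkST fun t s => hCK _ _]
    refine BlupAux.sInt_congr _ fun t => ?_
    rw [BlupAux.sInt_congr ζν (h := fun s : T => K s.1 t.1) fun s => hKsym t.1 s.1, hζν t]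
    exact BlupAux.sInt_congr _ fun u => hKsym _ _
  -- double integral against G k reduces to integrals of f
  have haG : ∀ (P : SignedMeasure T) (k : Fin m),
      (sInt P fun t => sInt (G k) fun s => K t.1 s.1)
        = ∑ j, D k j * sInt P fun t => f t.1 j := by
    intro P k
    have h1 : ∀ t : T, (sInt (G k) fun s => K t.1 s.1) = ∑ j, D k j * f t.1 j := by
      intro t
      rw [BlupAux.sInt_congr (G k) (h := fun s : T => K s.1 t.1) fun s => hKsym t.1 s.1]
      exact hG2 t k
    rw [BlupAux.sInt_congr P h1,
      BlupAux.sInt_fun_sum Finset.univ P (fun j t => D k j * f t.1 j)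
        (fun j => (hfm j).const_mul (D k j))
        (fun j => ⟨|D k j| * Cf, fun t => by
          rw [abs_mul]
          exact mul_le_mul_of_nonneg_left (hCf _ _) (abs_nonneg _)⟩)]
    exact Finset.sum_congr rfl fun j _ => BlupAux.sInt_fun_mul P (D k j) _
  -- expansion of integrals against Qstar
  have hQexp : ∀ (g : T → ℝ), Measurable g → ∀ C : ℝ, (∀ x, |g x| ≤ C) →
      sInt Qstar g = sInt ζν g + ∑ j, c j * sInt (G j) g := by
    intro g hg C hb
    rw [hQstar, BlupAux.sInt_add _ _ hg hb, BlupAux.sInt_sum _ _ hg hb]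
    exact congrArg _ (Finset.sum_congr rfl fun j _ => BlupAux.sInt_smul (G j) (c j) g)
  -- Qstar satisfies the unbiasedness condition
  have hQs : ∀ i, sInt Qstar (fun t => f t.1 i) = sInt ν fun s => f s.1 i := by
    intro i
    rw [hQexp _ (hfm i) Cf fun t => hCf _ _]
    have : (∑ j, c j * sInt (G j) fun t => f t.1 i) = c i := by
      simp only [hG1, mul_ite, mul_one, mul_zero]
      simp
    rw [this, hc i]
    ring
  -- the constant L
  set L : ℝ := ∑ j, c j * ∑ i, D j i * sInt ν fun s => f s.1 i with hL
  -- key identity: for unbiased P, the double integral against Qstar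
  have hkey : ∀ P : SignedMeasure T, (∀ i, sInt P (fun t => f t.1 i) = sInt ν fun s => f s.1 i) →
      (sInt P fun t => sInt Qstar fun s => K t.1 s.1)
        = (sInt ν fun t => sInt P fun s => K t.1 s.1) + L := by
    intro P hP
    obtain ⟨CP, hCP⟩ := hFb P
    rw [hswap P Qstar, hQexp _ (hFm P) CP hCP, hswap ζν P, ← hb_eq P]
    congr 1
    rw [hL]
    refine Finset.sum_congr rfl fun j _ => ?_
    rw [hswap (G j) P, haG P j]
    exact congrArg _ (Finset.sum_congr rfl fun i _ => by rw [hP i])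
  -- positivity of the quadratic form at Q - Qstar
  have hpos := hKpos (Q - Qstar)
  -- expand it
  obtain ⟨CR, hCR⟩ := hFb (Q - Qstar)
  obtain ⟨CQ, hCQ⟩ := hFb Q
  obtain ⟨CS, hCS⟩ := hFb Qstar
  rw [BlupAux.sInt_sub Q Qstar (hFm (Q - Qstar)) hCR, hswap Q (Q - Qstar),
    hswap Qstar (Q - Qstar), BlupAux.sInt_sub Q Qstar (hFm Q) hCQ,
    BlupAux.sInt_sub Q Qstar (hFm Qstar) hCS] at hpos
  have e1 : (sInt Q fun t => sInt Qstar fun s => K t.1 s.1)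
      = (sInt ν fun t => sInt Q fun s => K t.1 s.1) + L := hkey Q hQ
  have e2 : (sInt Qstar fun t => sInt Qstar fun s => K t.1 s.1)
      = (sInt ν fun t => sInt Qstar fun s => K t.1 s.1) + L := hkey Qstar hQs
  have e3 : (sInt Qstar fun t => sInt Q fun s => K t.1 s.1)
      = sInt Q fun t => sInt Qstar fun s => K t.1 s.1 := hswap Qstar Q
  rw [hM Q, hM Qstar]
  linarith
end

section
/- (Theorem 2.1, optimality of the BLUP at a point.) Let K : (T ∪ {t₀}) × (T ∪ {t₀}) → ℝ be a symmetric measurable kernel whose quadratic form is nonnegative on finite signed measures on T, let f be defined on T ∪ {t₀} with values in ℝ^m, and let t₀ ∉ T. Suppose: (i) there exist finite signed measures G₁,…,G_m on T and an m×m matrix D with ∫_T f_i(t) G_j(dt) = δ_{ij} and ∫_T K(t,s) G(dt) = D f(s) for all s ∈ T; (ii) there exists a finite signed measure ζ_{t₀} on T with ∫_T K(t,s) ζ_{t₀}(dt) = K(t₀,s) for all s ∈ T. Set c = f(t₀) − ∫_T f(t) ζ_{t₀}(dt) and Q* = ζ_{t₀} + Σ_j c_j G_j. Then for every finite signed measure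 Q on T with ∫_T f(t) Q(dt) = f(t₀), it holds that M(Q) ≥ M(Q*), where M(Q) = K(t₀,t₀) − 2 ∫_T K(t,t₀) Q(dt) + ∬_{T×T} K(t,s) Q(dt)Q(ds). -/
open MeasureTheory

namespace SIntAux

variable {α : Type*} [MeasurableSpace α]

lemma integrable_bdd (ν : Measure α) [IsFiniteMeasure ν] {g : α → ℝ} (hg : Measurable g)
    {C : ℝ} (hb : ∀ x, |g x| ≤ C) : Integrable g ν :=
  Integrable.mono' (integrable_const C) hg.aestronglyMeasurable
    (Filter.Eventually.of_forall fun x => by simpa [Real.norm_eq_abs] using hb x)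

lemma signed_apply (μ : SignedMeasure α) {i : Set α} (hi : MeasurableSet i) :
    μ i = (μ.toJordanDecomposition.posPart i).toReal
        - (μ.toJordanDecomposition.negPart i).toReal := by
  conv_lhs => rw [← μ.toSignedMeasure_toJordanDecomposition]
  exact Measure.toSignedMeasure_sub_apply hi

lemma sInt_eq (μ : SignedMeasure α) (a b : Measure α) [IsFiniteMeasure a] [IsFiniteMeasure b]
    (h : ∀ i : Set α, MeasurableSet i → μ i = (a i).toReal - (b i).toReal)
    {g : α → ℝ} (hg : Measurable g) {C : ℝ} (hb : ∀ x, |g x| ≤ C) :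
    sInt μ g = (∫ x, g x ∂a) - ∫ x, g x ∂b := by
  set p := μ.toJordanDecomposition.posPart with hp
  set n := μ.toJordanDecomposition.negPart with hn
  have hmeq : p + b = n + a := by
    ext i hi
    have h1 := signed_apply μ hi
    have h2 := h i hi
    rw [← hp, ← hn] at h1
    have e1 : p i ≠ ⊤ := measure_ne_top _ _
    have e2 : n i ≠ ⊤ := measure_ne_top _ _
    have e3 : a i ≠ ⊤ := measure_ne_top _ _
    have e4 : b i ≠ ⊤ := measure_ne_top _ _
    simp only [Measure.add_apply]
    rw [← ENNReal.toReal_eq_toReal_iff' (by simp [ENNReal.add_eq_top, e1, e4])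
      (by simp [ENNReal.add_eq_top, e2, e3]), ENNReal.toReal_add e1 e4, ENNReal.toReal_add e2 e3]
    linarith
  have hint : (∫ x, g x ∂(p + b)) = ∫ x, g x ∂(n + a) := by rw [hmeq]
  rw [integral_add_measure (integrable_bdd p hg hb) (integrable_bdd b hg hb),
      integral_add_measure (integrable_bdd n hg hb) (integrable_bdd a hg hb)] at hint
  simp only [sInt, ← hp, ← hn]
  linarith

lemma sInt_add (μ ν : SignedMeasure α) {g : α → ℝ} (hg : Measurable g) {C : ℝ}
    (hb : ∀ x, |g x| ≤ C) : sInt (μ + ν) g = sInt μ g + sInt ν g := by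
  rw [sInt_eq (μ + ν) (μ.toJordanDecomposition.posPart + ν.toJordanDecomposition.posPart)
      (μ.toJordanDecomposition.negPart + ν.toJordanDecomposition.negPart)
      (fun i hi => by
        rw [VectorMeasure.add_apply, signed_apply μ hi, signed_apply ν hi]
        simp only [Measure.add_apply,
          ENNReal.toReal_add (measure_ne_top _ _) (measure_ne_top _ _)]
        ring) hg hb,
    integral_add_measure (integrable_bdd _ hg hb) (integrable_bdd _ hg hb),
    integral_add_measure (integrable_bdd _ hg hb) (integrable_bdd _ hg hb)]
  simp only [sInt]
  ring

lemma sInt_zero (g : α → ℝ) : sInt (0 : SignedMeasure α) g = 0 := by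
  simp [sInt, SignedMeasure.toJordanDecomposition_zero]

lemma sInt_smul (r : ℝ) (μ : SignedMeasure α) {g : α → ℝ} (hg : Measurable g) {C : ℝ}
    (hb : ∀ x, |g x| ≤ C) : sInt (r • μ) g = r * sInt μ g := by
  rcases le_or_gt 0 r with hr | hr
  · haveI h1 := Measure.smul_finite μ.toJordanDecomposition.posPart
      (c := (ENNReal.ofReal r)) (by simp)
    haveI h2 := Measure.smul_finite μ.toJordanDecomposition.negPart
      (c := (ENNReal.ofReal r)) (by simp)
    rw [sInt_eq (r • μ) (ENNReal.ofReal r • μ.toJordanDecomposition.posPart)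
        (ENNReal.ofReal r • μ.toJordanDecomposition.negPart)
        (fun i hi => by
          rw [VectorMeasure.smul_apply, signed_apply μ hi]
          simp only [Measure.smul_apply, smul_eq_mul, ENNReal.toReal_mul,
            ENNReal.toReal_ofReal hr]
          ring) hg hb,
      integral_smul_measure, integral_smul_measure]
    simp only [sInt, ENNReal.toReal_ofReal hr, smul_eq_mul]
    ring
  · haveI h1 := Measure.smul_finite μ.toJordanDecomposition.posPart
      (c := (ENNReal.ofReal (-r))) (by simp)
    haveI h2 := Measure.smul_finite μ.toJordanDecomposition.negPart
      (c := (ENNReal.ofReal (-r))) (by simp)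
    have hr' : (0:ℝ) ≤ -r := by linarith
    rw [sInt_eq (r • μ) (ENNReal.ofReal (-r) • μ.toJordanDecomposition.negPart)
        (ENNReal.ofReal (-r) • μ.toJordanDecomposition.posPart)
        (fun i hi => by
          rw [VectorMeasure.smul_apply, signed_apply μ hi]
          simp only [Measure.smul_apply, smul_eq_mul, ENNReal.toReal_mul,
            ENNReal.toReal_ofReal hr']
          ring) hg hb,
      integral_smul_measure, integral_smul_measure]
    simp only [sInt, ENNReal.toReal_ofReal hr', smul_eq_mul]
    ring

lemma sInt_neg (μ : SignedMeasure α) {g : α → ℝ} (hg : Measurable g) {C : ℝ}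
    (hb : ∀ x, |g x| ≤ C) : sInt (-μ) g = -sInt μ g := by
  rw [← neg_one_smul ℝ μ, sInt_smul (-1) μ hg hb]; ring

lemma sInt_sub (μ ν : SignedMeasure α) {g : α → ℝ} (hg : Measurable g) {C : ℝ}
    (hb : ∀ x, |g x| ≤ C) : sInt (μ - ν) g = sInt μ g - sInt ν g := by
  rw [sub_eq_add_neg, sInt_add μ (-ν) hg hb, sInt_neg ν hg hb]; ring

lemma sInt_finset_sum {ι : Type*} (s : Finset ι) (μ : ι → SignedMeasure α) {g : α → ℝ}
    (hg : Measurable g) {C : ℝ} (hb : ∀ x, |g x| ≤ C) :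
    sInt (∑ j ∈ s, μ j) g = ∑ j ∈ s, sInt (μ j) g := by
  classical
  induction s using Finset.cons_induction with
  | empty => simp [sInt_zero]
  | cons j s hj ih => rw [Finset.sum_cons, sInt_add _ _ hg hb, ih, Finset.sum_cons]

lemma sInt_fun_add (μ : SignedMeasure α) {g h : α → ℝ}
    (hg1 : Integrable g μ.toJordanDecomposition.posPart)
    (hg2 : Integrable g μ.toJordanDecomposition.negPart)
    (hh1 : Integrable h μ.toJordanDecomposition.posPart)
    (hh2 : Integrable h μ.toJordanDecomposition.negPart) :
    sInt μ (fun x => g x + h x) = sInt μ g + sInt μ h := by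
  simp only [sInt]
  rw [integral_add hg1 hh1, integral_add hg2 hh2]; ring

lemma sInt_fun_sum {ι : Type*} (s : Finset ι) (μ : SignedMeasure α) (g : ι → α → ℝ)
    (hint : ∀ j ∈ s, Integrable (g j) μ.toJordanDecomposition.posPart
      ∧ Integrable (g j) μ.toJordanDecomposition.negPart) :
    sInt μ (fun x => ∑ j ∈ s, g j x) = ∑ j ∈ s, sInt μ (g j) := by
  simp only [sInt]
  rw [integral_finset_sum s (fun j hj => (hint j hj).1),
    integral_finset_sum s (fun j hj => (hint j hj).2), Finset.sum_sub_distrib]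

lemma sInt_fun_mul (μ : SignedMeasure α) (r : ℝ) (g : α → ℝ) :
    sInt μ (fun x => r * g x) = r * sInt μ g := by
  simp only [sInt, integral_const_mul]; ring

lemma abs_sInt_le (ν : SignedMeasure α) {g : α → ℝ} (hg : Measurable g) {C : ℝ}
    (hb : ∀ x, |g x| ≤ C) :
    |sInt ν g| ≤ C * (ν.toJordanDecomposition.posPart Set.univ).toReal
      + C * (ν.toJordanDecomposition.negPart Set.univ).toReal := by
  have h1 := norm_integral_le_of_norm_le_const (μ := ν.toJordanDecomposition.posPart) (f := g)
    (ae_of_all _ fun x => by simpa [Real.norm_eq_abs] using hb x)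
  have h2 := norm_integral_le_of_norm_le_const (μ := ν.toJordanDecomposition.negPart) (f := g)
    (ae_of_all _ fun x => by simpa [Real.norm_eq_abs] using hb x)
  rw [Real.norm_eq_abs] at h1 h2
  calc |sInt ν g| ≤ |∫ x, g x ∂ν.toJordanDecomposition.posPart|
        + |∫ x, g x ∂ν.toJordanDecomposition.negPart| := abs_sub _ _
    _ ≤ _ := add_le_add h1 h2

lemma measurable_intKernel (b : Measure α) [IsFiniteMeasure b] {F : α → α → ℝ}
    (hF : Measurable (Function.uncurry F)) :
    Measurable fun x => ∫ y, F x y ∂b :=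
  (hF.stronglyMeasurable.integral_prod_right').measurable

lemma measurable_sIntKernel (ν : SignedMeasure α) {F : α → α → ℝ}
    (hF : Measurable (Function.uncurry F)) :
    Measurable fun x => sInt ν (fun y => F x y) :=
  (measurable_intKernel _ hF).sub (measurable_intKernel _ hF)

lemma abs_sIntKernel_le (ν : SignedMeasure α) {F : α → α → ℝ}
    (hF : Measurable (Function.uncurry F)) {C : ℝ} (hb : ∀ x y, |F x y| ≤ C) (x : α) :
    |sInt ν (fun y => F x y)| ≤ C * (ν.toJordanDecomposition.posPart Set.univ).toReal
      + C * (ν.toJordanDecomposition.negPart Set.univ).toReal :=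
  abs_sInt_le ν (hF.comp (measurable_prodMk_left)) (fun y => hb x y)

lemma int_int_swap (a b : Measure α) [IsFiniteMeasure a] [IsFiniteMeasure b] {F : α → α → ℝ}
    (hF : Measurable (Function.uncurry F)) {C : ℝ} (hb : ∀ x y, |F x y| ≤ C) :
    ∫ x, ∫ y, F x y ∂b ∂a = ∫ y, ∫ x, F x y ∂a ∂b :=
  integral_integral_swap
    (integrable_bdd (a.prod b) hF (C := C) (fun p => hb p.1 p.2))

lemma sInt_swap (μ ν : SignedMeasure α) {F : α → α → ℝ}
    (hF : Measurable (Function.uncurry F)) {C : ℝ} (hb : ∀ x y, |F x y| ≤ C) :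
    sInt μ (fun x => sInt ν (fun y => F x y)) = sInt ν (fun y => sInt μ (fun x => F x y)) := by
  set p1 := μ.toJordanDecomposition.posPart
  set n1 := μ.toJordanDecomposition.negPart
  set p2 := ν.toJordanDecomposition.posPart
  set n2 := ν.toJordanDecomposition.negPart
  have hFswap : Measurable (Function.uncurry fun y x => F x y) :=
    hF.comp measurable_swap
  have hsub1 : ∀ (u : Measure α) [IsFiniteMeasure u],
      (∫ x, sInt ν (fun y => F x y) ∂u)
        = (∫ x, ∫ y, F x y ∂p2 ∂u) - ∫ x, ∫ y, F x y ∂n2 ∂u := by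
    intro u _
    simp only [sInt]
    exact integral_sub
      (integrable_bdd u (measurable_intKernel p2 hF)
        (C := C * (p2 Set.univ).toReal)
        (fun x => by
          have := norm_integral_le_of_norm_le_const (μ := p2) (f := fun y => F x y)
            (ae_of_all _ fun y => by simpa [Real.norm_eq_abs] using hb x y)
          simpa [Real.norm_eq_abs, measureReal_def] using this))
      (integrable_bdd u (measurable_intKernel n2 hF)
        (C := C * (n2 Set.univ).toReal)
        (fun x => by
          have := norm_integral_le_of_norm_le_const (μ := n2) (f := fun y => F x y)
            (ae_of_all _ fun y => by simpa [Real.norm_eq_abs] using hb x y)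
          simpa [Real.norm_eq_abs, measureReal_def] using this))
  have hsub2 : ∀ (u : Measure α) [IsFiniteMeasure u],
      (∫ y, sInt μ (fun x => F x y) ∂u)
        = (∫ y, ∫ x, F x y ∂p1 ∂u) - ∫ y, ∫ x, F x y ∂n1 ∂u := by
    intro u _
    simp only [sInt]
    exact integral_sub
      (integrable_bdd u (measurable_intKernel p1 hFswap)
        (C := C * (p1 Set.univ).toReal)
        (fun y => by
          have := norm_integral_le_of_norm_le_const (μ := p1) (f := fun x => F x y)
            (ae_of_all _ fun x => by simpa [Real.norm_eq_abs] using hb x y)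
          simpa [Real.norm_eq_abs, measureReal_def] using this))
      (integrable_bdd u (measurable_intKernel n1 hFswap)
        (C := C * (n1 Set.univ).toReal)
        (fun y => by
          have := norm_integral_le_of_norm_le_const (μ := n1) (f := fun x => F x y)
            (ae_of_all _ fun x => by simpa [Real.norm_eq_abs] using hb x y)
          simpa [Real.norm_eq_abs, measureReal_def] using this))
  have s11 := int_int_swap p1 p2 hF hb
  have s12 := int_int_swap p1 n2 hF hb
  have s21 := int_int_swap n1 p2 hF hb
  have s22 := int_int_swap n1 n2 hF hb
  have expand : sInt μ (fun x => sInt ν fun y => F x y)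
      = (∫ x, sInt ν (fun y => F x y) ∂p1) - ∫ x, sInt ν (fun y => F x y) ∂n1 := rfl
  have expand2 : sInt ν (fun y => sInt μ fun x => F x y)
      = (∫ y, sInt μ (fun x => F x y) ∂p2) - ∫ y, sInt μ (fun x => F x y) ∂n2 := rfl
  rw [expand, expand2, hsub1 p1, hsub1 n1, hsub2 p2, hsub2 n2, s11, s12, s21, s22]
  ring

end SIntAux


open SIntAux

/-- Theorem 2.1, optimality of the BLUP at a point.  Under Assumption A,
the measure `Q* = ζ_{t₀} + Σ_j c_j G_j` minimizes the MSE functional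
`M(Q) = K(t₀,t₀) − 2∫_T K(t,t₀) Q(dt) + ∬_{T×T} K dQ dQ` among all finite signed
measures `Q` on `T` satisfying the unbiasedness condition `∫_T f dQ = f(t₀)`. -/
theorem blup_point_optimality {d m : ℕ}
    (T : Set (Fin d → ℝ)) (hT : MeasurableSet T)
    (t0 : Fin d → ℝ) (ht0 : t0 ∉ T)
    (K : (Fin d → ℝ) → (Fin d → ℝ) → ℝ)
    (hKmeas : Measurable (Function.uncurry K))
    (hKbd : ∃ C, ∀ t s, |K t s| ≤ C)
    (hKsym : ∀ t s, K t s = K s t)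
    -- nonnegativity of the quadratic form on finite signed measures on `T`:
    (hKpos : ∀ R : SignedMeasure T, 0 ≤ sInt R fun t => sInt R fun s => K t.1 s.1)
    (f : (Fin d → ℝ) → Fin m → ℝ)
    (hfmeas : ∀ i, Measurable fun t => f t i)
    (hfbd : ∃ C, ∀ t i, |f t i| ≤ C)
    -- (i) existence of the BLUE measure `G` with matrix `D`:
    (G : Fin m → SignedMeasure T) (D : Fin m → Fin m → ℝ)
    (hG1 : ∀ i j, sInt (G j) (fun t => f t.1 i) = if i = j then 1 else 0)
    (hG2 : ∀ (s : T) (k : Fin m),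
      sInt (G k) (fun t => K t.1 s.1) = ∑ j, D k j * f s.1 j)
    -- (ii) existence of the measure `ζ_{t₀}`:
    (ζ : SignedMeasure T)
    (hζ : ∀ s : T, sInt ζ (fun t => K t.1 s.1) = K t0 s.1)
    (c : Fin m → ℝ)
    (hc : ∀ i, c i = f t0 i - sInt ζ fun t => f t.1 i)
    (Qstar : SignedMeasure T)
    (hQstar : Qstar = ζ + ∑ j, c j • G j)
    (M : SignedMeasure T → ℝ)
    (hM : ∀ Q : SignedMeasure T,
      M Q = K t0 t0 - 2 * (sInt Q fun t => K t.1 t0)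
        + (sInt Q fun t => sInt Q fun s => K t.1 s.1))
    (Q : SignedMeasure T)
    (hQ : ∀ i, sInt Q (fun t => f t.1 i) = f t0 i) :
    M Qstar ≤ M Q := by
  obtain ⟨CK, hCK⟩ := hKbd
  obtain ⟨Cf, hCf⟩ := hfbd
  have hcoe : Measurable (fun t : T => (t : Fin d → ℝ)) := measurable_subtype_coe
  have hKbmeas : Measurable (Function.uncurry (fun t s : T => K t.1 s.1)) :=
    hKmeas.comp ((hcoe.comp measurable_fst).prodMk (hcoe.comp measurable_snd))
  have hKbbd : ∀ t s : T, |K t.1 s.1| ≤ CK := fun t s => hCK _ _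
  have hmf : ∀ i, Measurable (fun t : T => f t.1 i) := fun i => (hfmeas i).comp hcoe
  have hmg0 : Measurable (fun t : T => K t.1 t0) := hKmeas.comp (hcoe.prodMk measurable_const)
  have hmKs : ∀ s : T, Measurable (fun t : T => K t.1 s.1) :=
    fun s => hKmeas.comp (hcoe.prodMk measurable_const)
  have hmKt : ∀ t : T, Measurable (fun s : T => K t.1 s.1) :=
    fun t => hKmeas.comp (measurable_const.prodMk hcoe)
  -- decomposition of `sInt Qstar`
  have stepA : ∀ (g : T → ℝ), Measurable g → ∀ {C : ℝ}, (∀ x, |g x| ≤ C) →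
      sInt Qstar g = sInt ζ g + ∑ j, c j * sInt (G j) g := by
    intro g hg C hb
    rw [hQstar, sInt_add _ _ hg hb, sInt_finset_sum _ _ hg hb]
    congr 1
    exact Finset.sum_congr rfl fun j _ => sInt_smul (c j) (G j) hg hb
  have hQsf : ∀ i, sInt Qstar (fun t => f t.1 i) = f t0 i := by
    intro i
    rw [stepA _ (hmf i) (fun t => hCf t.1 i)]
    simp only [hG1, mul_ite, mul_one, mul_zero, Finset.sum_ite_eq, Finset.mem_univ, if_true]
    rw [hc i]; ring
  have hRf : ∀ i, sInt (Q - Qstar) (fun t => f t.1 i) = 0 := by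
    intro i
    rw [sInt_sub _ _ (hmf i) (fun t => hCf t.1 i), hQ i, hQsf i, sub_self]
  have hQsK : ∀ s : T, sInt Qstar (fun t => K t.1 s.1)
      = K t0 s.1 + ∑ k, c k * ∑ j, D k j * f s.1 j := by
    intro s
    rw [stepA _ (hmKs s) (fun t => hCK _ _), hζ s]
    congr 1
    exact Finset.sum_congr rfl fun k _ => by rw [hG2 s k]
  have hQsK' : ∀ t : T, sInt Qstar (fun s => K t.1 s.1)
      = K t.1 t0 + ∑ k, c k * ∑ j, D k j * f t.1 j := by
    intro t
    rw [show (fun s : T => K t.1 s.1) = (fun s : T => K s.1 t.1) from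
        funext fun s => hKsym _ _, hQsK t, hKsym t0 t.1]
  -- integrability helpers
  have hik : ∀ (u : Measure T) [IsFiniteMeasure u], ∀ k : Fin m,
      Integrable (fun t : T => c k * ∑ j, D k j * f t.1 j) u := by
    intro u _ k
    exact (integrable_finset_sum _ fun j _ =>
      (integrable_bdd u (hmf j) (fun t => hCf t.1 j)).const_mul _).const_mul _
  have hintsum : ∀ (u : Measure T) [IsFiniteMeasure u],
      Integrable (fun t : T => ∑ k, c k * ∑ j, D k j * f t.1 j) u := by
    intro u _
    exact integrable_finset_sum _ fun k _ => hik u k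
  have hsplit : ∀ (ν : SignedMeasure T),
      sInt ν (fun t => K t.1 t0 + ∑ k, c k * ∑ j, D k j * f t.1 j)
        = sInt ν (fun t => K t.1 t0)
          + ∑ k, c k * ∑ j, D k j * sInt ν (fun t => f t.1 j) := by
    intro ν
    rw [sInt_fun_add ν (integrable_bdd _ hmg0 (fun t => hCK _ _))
      (integrable_bdd _ hmg0 (fun t => hCK _ _)) (hintsum _) (hintsum _)]
    congr 1
    rw [sInt_fun_sum Finset.univ ν (fun k t => c k * ∑ j, D k j * f t.1 j)
      (fun k _ => ⟨hik _ k, hik _ k⟩)]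
    refine Finset.sum_congr rfl fun k _ => ?_
    rw [sInt_fun_mul]
    congr 1
    rw [sInt_fun_sum Finset.univ ν (fun j t => D k j * f t.1 j)
      (fun j _ => ⟨(integrable_bdd _ (hmf j) (fun t => hCf t.1 j)).const_mul _,
                   (integrable_bdd _ (hmf j) (fun t => hCf t.1 j)).const_mul _⟩)]
    exact Finset.sum_congr rfl fun j _ => sInt_fun_mul ν _ _
  have hcombR : sInt (Q - Qstar) (fun t => K t.1 t0 + ∑ k, c k * ∑ j, D k j * f t.1 j)
      = sInt (Q - Qstar) (fun t => K t.1 t0) := by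
    rw [hsplit]
    simp [hRf]
  have hBRQ : sInt (Q - Qstar) (fun t => sInt Qstar fun s => K t.1 s.1)
      = sInt (Q - Qstar) (fun t => K t.1 t0) := by
    rw [show (fun t : T => sInt Qstar fun s => K t.1 s.1)
        = (fun t : T => K t.1 t0 + ∑ k, c k * ∑ j, D k j * f t.1 j) from
        funext fun t => hQsK' t]
    exact hcombR
  have hBQR : sInt Qstar (fun t => sInt (Q - Qstar) fun s => K t.1 s.1)
      = sInt (Q - Qstar) (fun t => K t.1 t0) := by
    rw [sInt_swap (F := fun t s : T => K t.1 s.1) Qstar (Q - Qstar) hKbmeas hKbbd]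
    rw [show (fun y : T => sInt Qstar fun x : T => K x.1 y.1)
        = (fun y : T => K y.1 t0 + ∑ k, c k * ∑ j, D k j * f y.1 j) from
        funext fun y => by rw [hQsK y, hKsym t0 y.1]]
    exact hcombR
  have houter : ∀ (g : T → ℝ), Measurable g → ∀ {C : ℝ}, (∀ x, |g x| ≤ C) →
      sInt Q g = sInt (Q - Qstar) g + sInt Qstar g := by
    intro g hg C hb
    rw [sInt_sub _ _ hg hb]; ring
  have hbR := abs_sIntKernel_le (Q - Qstar) (F := fun t s : T => K t.1 s.1) hKbmeas hKbbd
  have hbS := abs_sIntKernel_le Qstar (F := fun t s : T => K t.1 s.1) hKbmeas hKbbd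
  have hmR : Measurable fun t : T => sInt (Q - Qstar) fun s => K t.1 s.1 :=
    measurable_sIntKernel _ hKbmeas
  have hmS : Measurable fun t : T => sInt Qstar fun s => K t.1 s.1 :=
    measurable_sIntKernel _ hKbmeas
  have hadd : ∀ (ν : SignedMeasure T),
      sInt ν (fun t => (sInt (Q - Qstar) fun s => K t.1 s.1)
          + (sInt Qstar fun s => K t.1 s.1))
        = sInt ν (fun t => sInt (Q - Qstar) fun s => K t.1 s.1)
          + sInt ν (fun t => sInt Qstar fun s => K t.1 s.1) := fun ν =>
    sInt_fun_add ν (integrable_bdd _ hmR hbR) (integrable_bdd _ hmR hbR)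
      (integrable_bdd _ hmS hbS) (integrable_bdd _ hmS hbS)
  have hBQQ : (sInt Q fun t => sInt Q fun s => K t.1 s.1)
      = (sInt (Q - Qstar) fun t => sInt (Q - Qstar) fun s => K t.1 s.1)
        + 2 * sInt (Q - Qstar) (fun t => K t.1 t0)
        + (sInt Qstar fun t => sInt Qstar fun s => K t.1 s.1) := by
    have e1 : (fun t : T => sInt Q fun s => K t.1 s.1)
        = fun t : T => (sInt (Q - Qstar) fun s => K t.1 s.1)
            + (sInt Qstar fun s => K t.1 s.1) :=
      funext fun t => houter _ (hmKt t) (fun s => hCK _ _)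
    rw [e1, houter (fun t : T => (sInt (Q - Qstar) fun s => K t.1 s.1)
        + (sInt Qstar fun s => K t.1 s.1)) (hmR.add hmS) (fun x => (abs_add_le _ _).trans (add_le_add (hbR x) (hbS x))),
      hadd (Q - Qstar), hadd Qstar, hBRQ, hBQR]
    ring
  have hg0RR : sInt Q (fun t => K t.1 t0)
      = sInt (Q - Qstar) (fun t => K t.1 t0) + sInt Qstar (fun t => K t.1 t0) :=
    houter _ hmg0 (fun t => hCK _ _)
  have hpos := hKpos (Q - Qstar)
  rw [hM Q, hM Qstar]
  linarith [hpos, hBQQ, hg0RR]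
end

section
/- (Theorem 2.1, MSE formula.) Under the hypotheses of Theorem 2.1—K symmetric with nonnegative quadratic form on T, measures G₁,…,G_m and matrix D with ∫_T f_i dG_j = δ_{ij}, ∫_T K(t,s) G(dt) = D f(s) for all s ∈ T and D_{ij} = ∬_{T×T} K(t,s) G_i(dt) G_j(ds), and ζ_{t₀} with ∫_T K(t,s) ζ_{t₀}(dt) = K(t₀,s) for all s ∈ T—let c = f(t₀) − ∫_T f dζ_{t₀} and Q* = ζ_{t₀} + Σ_j c_j G_j. Then the minimal mean squared error equals M(Q*) = K(t₀,t₀) + cᵀ D f(t₀) − ∫_T K(t,t₀) Q*(dt), where M(Q) = K(t₀,t₀) − 2∫_T K(t,t₀) Q(dt) + ∬_{T×T} K(t,s) Q(dt)Q(ds). -/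
open MeasureTheory
open scoped NNReal

section Helpers
variable {α : Type*} [MeasurableSpace α]

lemma bdd_integrable {g : α → ℝ} (hm : Measurable g) {C : ℝ} (hb : ∀ x, |g x| ≤ C)
    (ν : Measure α) [IsFiniteMeasure ν] : Integrable g ν :=
  ⟨hm.aestronglyMeasurable,
    HasFiniteIntegral.of_bounded (ae_of_all _ fun x => by simpa using hb x)⟩

lemma sInt_eq_sub (μ : SignedMeasure α) (a b : Measure α) [IsFiniteMeasure a] [IsFiniteMeasure b]
    (h : μ = a.toSignedMeasure - b.toSignedMeasure)
    {g : α → ℝ} (hm : Measurable g) {C : ℝ} (hb : ∀ x, |g x| ≤ C) :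
    sInt μ g = (∫ x, g x ∂a) - ∫ x, g x ∂b := by
  set p := μ.toJordanDecomposition.posPart with hp
  set n := μ.toJordanDecomposition.negPart with hn
  have hμ : μ = p.toSignedMeasure - n.toSignedMeasure := by
    conv_lhs => rw [← μ.toSignedMeasure_toJordanDecomposition]
    rfl
  have key : a + n = p + b := by
    ext E hE
    have h2 := congrArg (fun σ : SignedMeasure α => σ E) (h.symm.trans hμ)
    simp only [VectorMeasure.sub_apply, Measure.toSignedMeasure_apply_measurable hE] at h2
    have h3 : ((a + n) E).toReal = ((p + b) E).toReal := by
      rw [Measure.add_apply, Measure.add_apply,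
        ENNReal.toReal_add (measure_ne_top _ _) (measure_ne_top _ _),
        ENNReal.toReal_add (measure_ne_top _ _) (measure_ne_top _ _)]
      unfold Measure.real at h2
      linarith
    exact (ENNReal.toReal_eq_toReal_iff' (by finiteness) (by finiteness)).mp h3
  have h4 : (∫ x, g x ∂a) + ∫ x, g x ∂n = (∫ x, g x ∂p) + ∫ x, g x ∂b := by
    rw [← integral_add_measure (bdd_integrable hm hb a) (bdd_integrable hm hb n),
      ← integral_add_measure (bdd_integrable hm hb p) (bdd_integrable hm hb b), key]
  unfold sInt
  rw [← hp, ← hn]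
  linarith

lemma sInt_add (μ ν : SignedMeasure α) {g : α → ℝ} (hm : Measurable g) {C : ℝ}
    (hb : ∀ x, |g x| ≤ C) : sInt (μ + ν) g = sInt μ g + sInt ν g := by
  have h : μ + ν =
      (μ.toJordanDecomposition.posPart + ν.toJordanDecomposition.posPart).toSignedMeasure -
        (μ.toJordanDecomposition.negPart + ν.toJordanDecomposition.negPart).toSignedMeasure := by
    rw [Measure.toSignedMeasure_add, Measure.toSignedMeasure_add]
    conv_lhs => rw [← μ.toSignedMeasure_toJordanDecomposition,
      ← ν.toSignedMeasure_toJordanDecomposition]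
    show μ.toJordanDecomposition.posPart.toSignedMeasure -
        μ.toJordanDecomposition.negPart.toSignedMeasure +
        (ν.toJordanDecomposition.posPart.toSignedMeasure -
          ν.toJordanDecomposition.negPart.toSignedMeasure) = _
    abel
  rw [sInt_eq_sub _ _ _ h hm hb,
    integral_add_measure (bdd_integrable hm hb _) (bdd_integrable hm hb _),
    integral_add_measure (bdd_integrable hm hb _) (bdd_integrable hm hb _)]
  unfold sInt
  ring

lemma sInt_zero {g : α → ℝ} : sInt (0 : SignedMeasure α) g = 0 := by
  unfold sInt
  rw [SignedMeasure.toJordanDecomposition_zero]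
  simp

lemma smul_toSM (r : ℝ≥0) (ν : Measure α) [IsFiniteMeasure ν] :
    ((r : ℝ) • ν.toSignedMeasure) = (r • ν).toSignedMeasure := by
  rw [Measure.toSignedMeasure_smul]
  ext i hi
  simp [NNReal.smul_def]

lemma sInt_smul (r : ℝ) (μ : SignedMeasure α) {g : α → ℝ} (hm : Measurable g) {C : ℝ}
    (hb : ∀ x, |g x| ≤ C) : sInt (r • μ) g = r * sInt μ g := by
  set p := μ.toJordanDecomposition.posPart with hp
  set n := μ.toJordanDecomposition.negPart with hn
  have hμ : μ = p.toSignedMeasure - n.toSignedMeasure := by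
    conv_lhs => rw [← μ.toSignedMeasure_toJordanDecomposition]
    rfl
  rcases le_or_gt 0 r with hr | hr
  · have h : r • μ = (r.toNNReal • p).toSignedMeasure - (r.toNNReal • n).toSignedMeasure := by
      rw [← smul_toSM, ← smul_toSM, ← (smul_sub (r.toNNReal : ℝ) p.toSignedMeasure n.toSignedMeasure), ← hμ, Real.coe_toNNReal _ hr]
    rw [sInt_eq_sub _ _ _ h hm hb, integral_smul_nnreal_measure, integral_smul_nnreal_measure]
    unfold sInt
    rw [← hp, ← hn, NNReal.smul_def, NNReal.smul_def, Real.coe_toNNReal _ hr]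
    simp only [smul_eq_mul]
    ring
  · have hneg : n.toSignedMeasure - p.toSignedMeasure = -μ := by
      conv_rhs => rw [hμ]
      abel
    have h : r • μ = ((-r).toNNReal • n).toSignedMeasure - ((-r).toNNReal • p).toSignedMeasure := by
      rw [← smul_toSM, ← smul_toSM, ← (smul_sub ((-r).toNNReal : ℝ) n.toSignedMeasure p.toSignedMeasure), Real.coe_toNNReal _ (by linarith), hneg,
        neg_smul_neg]
    rw [sInt_eq_sub _ _ _ h hm hb, integral_smul_nnreal_measure, integral_smul_nnreal_measure]
    unfold sInt
    rw [← hp, ← hn, NNReal.smul_def, NNReal.smul_def, Real.coe_toNNReal _ (by linarith)]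
    simp only [smul_eq_mul]
    ring

lemma sInt_sum {ι : Type*} (s : Finset ι) (μ : ι → SignedMeasure α) {g : α → ℝ}
    (hm : Measurable g) {C : ℝ} (hb : ∀ x, |g x| ≤ C) :
    sInt (∑ j ∈ s, μ j) g = ∑ j ∈ s, sInt (μ j) g := by
  induction s using Finset.cons_induction with
  | empty => simpa using sInt_zero
  | cons j s hj ih =>
    rw [Finset.sum_cons, Finset.sum_cons, sInt_add _ _ hm hb, ih]

lemma sInt_fun_add (μ : SignedMeasure α) {g h : α → ℝ} (hgm : Measurable g)
    (hgb : ∃ C, ∀ x, |g x| ≤ C) (hhm : Measurable h) (hhb : ∃ C, ∀ x, |h x| ≤ C) :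
    sInt μ (fun x => g x + h x) = sInt μ g + sInt μ h := by
  obtain ⟨Cg, hCg⟩ := hgb
  obtain ⟨Ch, hCh⟩ := hhb
  unfold sInt
  rw [integral_add (bdd_integrable hgm hCg _) (bdd_integrable hhm hCh _),
    integral_add (bdd_integrable hgm hCg _) (bdd_integrable hhm hCh _)]
  ring

lemma sInt_fun_sum {ι : Type*} (s : Finset ι) (μ : SignedMeasure α) (r : ι → ℝ)
    (h : ι → α → ℝ) (hm : ∀ i, Measurable (h i)) (hb : ∀ i, ∃ C, ∀ x, |h i x| ≤ C) :
    sInt μ (fun x => ∑ i ∈ s, r i * h i x) = ∑ i ∈ s, r i * sInt μ (h i) := by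
  choose C hC using hb
  unfold sInt
  rw [integral_finset_sum _ (fun i _ => ((bdd_integrable (hm i) (hC i) _).const_mul _)),
    integral_finset_sum _ (fun i _ => ((bdd_integrable (hm i) (hC i) _).const_mul _)),
    ← Finset.sum_sub_distrib]
  refine Finset.sum_congr rfl fun i _ => ?_
  rw [integral_const_mul, integral_const_mul]
  ring

lemma bdd_sum {ι : Type*} (s : Finset ι) (h : ι → α → ℝ)
    (hb : ∀ i, ∃ C, ∀ x, |h i x| ≤ C) : ∃ C, ∀ x, |∑ i ∈ s, h i x| ≤ C := by
  choose C hC using hb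
  exact ⟨∑ i ∈ s, C i, fun x =>
    (Finset.abs_sum_le_sum_abs _ _).trans (Finset.sum_le_sum fun i _ => hC i x)⟩

end Helpers


/-- Theorem 2.1, MSE formula.  Under the hypotheses of Theorem 2.1, with
`D` the covariance matrix of the BLUE, the minimal mean squared error equals
`M(Q*) = K(t₀,t₀) + cᵀ D f(t₀) − ∫_T K(t,t₀) Q*(dt)`. -/
theorem blup_point_mse_value {d m : ℕ}
    (T : Set (Fin d → ℝ)) (hT : MeasurableSet T)
    (t0 : Fin d → ℝ) (ht0 : t0 ∉ T)
    (K : (Fin d → ℝ) → (Fin d → ℝ) → ℝ)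
    (hKmeas : Measurable (Function.uncurry K))
    (hKbd : ∃ C, ∀ t s, |K t s| ≤ C)
    (hKsym : ∀ t s, K t s = K s t)
    (hKpos : ∀ R : SignedMeasure T, 0 ≤ sInt R fun t => sInt R fun s => K t.1 s.1)
    (f : (Fin d → ℝ) → Fin m → ℝ)
    (hfmeas : ∀ i, Measurable fun t => f t i)
    (hfbd : ∃ C, ∀ t i, |f t i| ≤ C)
    (G : Fin m → SignedMeasure T) (D : Fin m → Fin m → ℝ)
    (hG1 : ∀ i j, sInt (G j) (fun t => f t.1 i) = if i = j then 1 else 0)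
    (hG2 : ∀ (s : T) (k : Fin m),
      sInt (G k) (fun t => K t.1 s.1) = ∑ j, D k j * f s.1 j)
    -- `D` is the covariance matrix of the BLUE:
    (hD : ∀ i j, D i j = sInt (G i) fun t => sInt (G j) fun s => K t.1 s.1)
    (ζ : SignedMeasure T)
    (hζ : ∀ s : T, sInt ζ (fun t => K t.1 s.1) = K t0 s.1)
    (c : Fin m → ℝ)
    (hc : ∀ i, c i = f t0 i - sInt ζ fun t => f t.1 i)
    (Qstar : SignedMeasure T)
    (hQstar : Qstar = ζ + ∑ j, c j • G j)
    (M : SignedMeasure T → ℝ)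
    (hM : ∀ Q : SignedMeasure T,
      M Q = K t0 t0 - 2 * (sInt Q fun t => K t.1 t0)
        + (sInt Q fun t => sInt Q fun s => K t.1 s.1)) :
    M Qstar = K t0 t0 + (∑ i, c i * ∑ j, D i j * f t0 j)
      - sInt Qstar (fun t => K t.1 t0) := by
  obtain ⟨CK, hCK⟩ := hKbd
  obtain ⟨Cf, hCf⟩ := hfbd
  -- measurability helpers
  have hKm1 : ∀ s : Fin d → ℝ, Measurable fun t : T => K t.1 s := fun s =>
    (hKmeas.comp (measurable_id.prodMk measurable_const)).comp measurable_subtype_coe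
  have hKm2 : ∀ t : Fin d → ℝ, Measurable fun s : T => K t s.1 := fun t =>
    (hKmeas.comp (measurable_const.prodMk measurable_id)).comp measurable_subtype_coe
  have hfm : ∀ i, Measurable fun t : T => f t.1 i := fun i =>
    (hfmeas i).comp measurable_subtype_coe
  -- linearity of `sInt` in the measure, applied to `Qstar`
  have L1 : ∀ (g : T → ℝ), Measurable g → ∀ C : ℝ, (∀ x, |g x| ≤ C) →
      sInt Qstar g = sInt ζ g + ∑ j, c j * sInt (G j) g := by
    intro g hm C hb
    rw [hQstar, sInt_add _ _ hm hb, sInt_sum _ _ hm hb]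
    congr 1
    exact Finset.sum_congr rfl fun j _ => sInt_smul (c j) (G j) hm hb
  -- `Qstar` integrates `f` correctly
  have key1 : ∀ i, sInt Qstar (fun t => f t.1 i) = f t0 i := by
    intro i
    rw [L1 _ (hfm i) Cf (fun t => hCf t.1 i)]
    have h1 : sInt ζ (fun t : T => f t.1 i) = f t0 i - c i := by
      have := hc i; linarith
    simp only [h1, hG1]
    rw [Finset.sum_congr rfl fun j (_ : j ∈ Finset.univ) =>
      (by rw [mul_ite, mul_one, mul_zero] :
        c j * (if i = j then (1:ℝ) else 0) = if i = j then c j else 0)]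
    rw [Finset.sum_ite_eq]
    simp
  -- inner integral of `K` against `Qstar`
  have key2 : ∀ t : T, sInt Qstar (fun s => K t.1 s.1)
      = K t.1 t0 + ∑ j, c j * ∑ i, D j i * f t.1 i := by
    intro t
    have e : (fun s : T => K t.1 s.1) = fun s : T => K s.1 t.1 := funext fun s => hKsym _ _
    rw [e, L1 _ (hKm1 t.1) CK (fun s => hCK s.1 t.1), hζ t, hKsym t0 t.1]
    congr 1
    exact Finset.sum_congr rfl fun j _ => by rw [hG2 t j]
  -- boundedness of the auxiliary functions
  have hbD : ∀ j, ∀ t : T, |∑ i, D j i * f t.1 i| ≤ ∑ i, |D j i| * Cf := by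
    intro j t
    refine (Finset.abs_sum_le_sum_abs _ _).trans (Finset.sum_le_sum fun i _ => ?_)
    rw [abs_mul]
    exact mul_le_mul_of_nonneg_left (hCf t.1 i) (abs_nonneg _)
  have hmD : ∀ j, Measurable fun t : T => ∑ i, D j i * f t.1 i := fun j =>
    Finset.measurable_sum _ fun i _ => (hfm i).const_mul _
  -- outer integral
  have key3 : sInt Qstar (fun t => sInt Qstar fun s => K t.1 s.1)
      = sInt Qstar (fun t => K t.1 t0) + ∑ j, c j * ∑ i, D j i * f t0 i := by
    have e2 : (fun t : T => sInt Qstar fun s => K t.1 s.1)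
        = fun t : T => K t.1 t0 + ∑ j, c j * ∑ i, D j i * f t.1 i := funext key2
    rw [e2, sInt_fun_add Qstar (hKm1 t0) ⟨CK, fun t => hCK t.1 t0⟩
        (Finset.measurable_sum _ fun j _ => (hmD j).const_mul _)
        (bdd_sum _ _ fun j => ⟨|c j| * ∑ i, |D j i| * Cf, fun t => by
          rw [abs_mul]
          exact mul_le_mul_of_nonneg_left (hbD j t) (abs_nonneg _)⟩),
      sInt_fun_sum _ Qstar c _ hmD (fun j => ⟨∑ i, |D j i| * Cf, hbD j⟩)]
    congr 1
    refine Finset.sum_congr rfl fun j _ => ?_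
    rw [sInt_fun_sum _ Qstar (D j) _ hfm (fun i => ⟨Cf, fun t => hCf t.1 i⟩)]
    congr 1
    exact Finset.sum_congr rfl fun i _ => by rw [key1 i]
  rw [hM Qstar, key3]
  have : (∑ j, c j * ∑ i, D j i * f t0 i) = ∑ i, c i * ∑ j, D i j * f t0 j := rfl
  rw [this]
  ring
end

section
/- (Classical discrete kriging BLUP, MSE block formula.) Let Σ be a symmetric positive definite N×N real matrix, X an N×m real matrix of full column rank m, f₀ ∈ ℝ^m, K₀ ∈ ℝ^N, k₀ ∈ ℝ, C = XᵀΣ⁻¹X, and Q* = Σ⁻¹K₀ + Σ⁻¹X C⁻¹ (f₀ − XᵀΣ⁻¹K₀). Then the block matrix B = [[0, Xᵀ],[X, Σ]] of size (m+N)×(m+N) is invertible and k₀ − 2K₀ᵀQ* + Q*ᵀΣQ* = k₀ − [f₀; K₀]ᵀ B⁻¹ [f₀; K₀], where [f₀; K₀] denotes the concatenated vector in ℝ^{m+N}. -/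
open Matrix

/-- classical discrete kriging BLUP, MSE block formula.  With `Σ`
symmetric positive definite and `X` of full column rank, the block matrix
`B = [[0, Xᵀ],[X, Σ]]` is invertible and the mean squared error of the BLUP `Q*` satisfies
`k₀ − 2K₀ᵀQ* + Q*ᵀΣQ* = k₀ − [f₀; K₀]ᵀ B⁻¹ [f₀; K₀]`. -/
theorem discrete_kriging_mse_block_formula {N m : ℕ}
    (Sig : Matrix (Fin N) (Fin N) ℝ) (hsym : Sig.IsSymm) (hpd : Sig.PosDef)
    (X : Matrix (Fin N) (Fin m) ℝ) (hX : Function.Injective X.mulVec)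
    (f0 : Fin m → ℝ) (K0 : Fin N → ℝ) (k0 : ℝ)
    (C : Matrix (Fin m) (Fin m) ℝ) (hC : C = Xᵀ * Sig⁻¹ * X)
    (Qstar : Fin N → ℝ)
    (hQstar : Qstar = Sig⁻¹.mulVec K0
      + Sig⁻¹.mulVec (X.mulVec (C⁻¹.mulVec (f0 - Xᵀ.mulVec (Sig⁻¹.mulVec K0)))))
    (B : Matrix (Fin m ⊕ Fin N) (Fin m ⊕ Fin N) ℝ)
    (hB : B = Matrix.fromBlocks (0 : Matrix (Fin m) (Fin m) ℝ) Xᵀ X Sig) :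
    IsUnit B.det ∧
    k0 - 2 * (K0 ⬝ᵥ Qstar) + Qstar ⬝ᵥ Sig.mulVec Qstar
      = k0 - Sum.elim f0 K0 ⬝ᵥ B⁻¹.mulVec (Sum.elim f0 K0) := by
  -- Σ is invertible
  have hSigU : IsUnit Sig.det := (Matrix.isUnit_iff_isUnit_det _).1 hpd.isUnit
  letI : Invertible Sig := hpd.isUnit.invertible
  -- C = XᵀΣ⁻¹X is positive definite
  have hCpd : C.PosDef := by
    rw [hC]
    refine Matrix.PosDef.of_dotProduct_mulVec_pos ?_ (fun x hx => ?_)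
    · have h1 : (Sig⁻¹).IsHermitian := hpd.inv.isHermitian
      have h2 := Matrix.isHermitian_conjTranspose_mul_mul X h1
      simpa [Matrix.conjTranspose_eq_transpose_of_trivial] using h2
    · have hXx : X *ᵥ x ≠ 0 := fun h => hx (hX (by simpa using h))
      have h3 := hpd.inv.dotProduct_mulVec_pos hXx
      simp only [star_trivial] at h3 ⊢
      rw [← Matrix.mulVec_mulVec, ← Matrix.mulVec_mulVec, Matrix.dotProduct_mulVec x Xᵀ,
        Matrix.vecMul_transpose]
      exact h3
  have hCU : IsUnit C.det := (Matrix.isUnit_iff_isUnit_det _).1 hCpd.isUnit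
  letI : Invertible C := hCpd.isUnit.invertible
  -- the Schur complement of Σ in B is -C
  have hS : (0 : Matrix (Fin m) (Fin m) ℝ) - Xᵀ * ⅟Sig * X = -C := by
    rw [Matrix.invOf_eq_nonsing_inv, hC, zero_sub]
  letI : Invertible ((0 : Matrix (Fin m) (Fin m) ℝ) - Xᵀ * ⅟Sig * X) :=
    hS ▸ (invertibleNeg C)
  letI hBinvertible : Invertible B := by
    rw [hB]; exact Matrix.fromBlocks₂₂Invertible _ _ _ _
  have hBU : IsUnit B.det := (Matrix.isUnit_iff_isUnit_det B).1 (isUnit_of_invertible B)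
  refine ⟨hBU, ?_⟩
  set g : Fin N → ℝ := Sig⁻¹ *ᵥ K0 with hg
  set w : Fin m → ℝ := C⁻¹ *ᵥ (f0 - Xᵀ *ᵥ g) with hw
  have hSigSig : Sig * Sig⁻¹ = 1 := Matrix.mul_nonsing_inv _ hSigU
  have hCC : C * C⁻¹ = 1 := Matrix.mul_nonsing_inv _ hCU
  -- key identity 1 : Σ Q* = K₀ + X w
  have key1 : Sig *ᵥ Qstar = K0 + X *ᵥ w := by
    rw [hQstar, Matrix.mulVec_add, Matrix.mulVec_mulVec, Matrix.mulVec_mulVec, hSigSig,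
      Matrix.one_mulVec, Matrix.one_mulVec]
  -- key identity 2 : Xᵀ Q* = f₀
  have key2 : Xᵀ *ᵥ Qstar = f0 := by
    rw [hQstar, Matrix.mulVec_add]
    have h4 : Xᵀ *ᵥ Sig⁻¹ *ᵥ X *ᵥ w = f0 - Xᵀ *ᵥ g := by
      rw [Matrix.mulVec_mulVec, Matrix.mulVec_mulVec, ← hC, hw, Matrix.mulVec_mulVec, hCC,
        Matrix.one_mulVec]
    rw [h4]
    abel
  -- B maps Sum.elim (-w) Qstar to Sum.elim f0 K0
  have hBv : B *ᵥ Sum.elim (-w) Qstar = Sum.elim f0 K0 := by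
    rw [hB, Matrix.fromBlocks_mulVec, Sum.elim_comp_inl, Sum.elim_comp_inr,
      Matrix.zero_mulVec, zero_add, key2, key1, Matrix.mulVec_neg]
    have h5 : -(X *ᵥ w) + (K0 + X *ᵥ w) = K0 := by abel
    rw [h5]
  have hBinv : B⁻¹ *ᵥ Sum.elim f0 K0 = Sum.elim (-w) Qstar := by
    rw [← hBv, Matrix.mulVec_mulVec, Matrix.nonsing_inv_mul B hBU, Matrix.one_mulVec]
  rw [hBinv, sumElim_dotProduct_sumElim]
  -- Q* Σ Q* = K₀ · Q* + f₀ · w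
  have key3 : Qstar ⬝ᵥ Sig *ᵥ Qstar = K0 ⬝ᵥ Qstar + f0 ⬝ᵥ w := by
    rw [key1, dotProduct_add, Matrix.dotProduct_mulVec Qstar X w,
      ← Matrix.mulVec_transpose, key2, dotProduct_comm Qstar K0]
  rw [key3, dotProduct_neg]
  ring
end

section
/- (Theorem 3.1, MSE formula.) Under the hypotheses of Theorem 3.1—with G_{kj}, D, ζ₀,…,ζ_q, c = f^{(p)}(t₀) − Σ_j ∫ f^{(j)} dζ_j and Q*_j = ζ_j + Σ_k c_k G_{kj} as there, and additionally D_{kl} = Σ_{i,j} ∬_{T_i×T_j} K_{ij}(t,s) G_{ki}(dt) G_{lj}(ds)—the minimal mean squared error equals M(Q*) = K_{pp}(t₀,t₀) + cᵀ D f^{(p)}(t₀) − Σ_j ∫_{T_j} K_{pj}(t₀,t) Q*_j(dt), where K_{ij}(t,s) = ∂^{i+j}K(t,s)/∂t^i∂s^j and M(Q) = K_{pp}(t₀,t₀) − 2 Σ_j ∫_{T_j} K_{pj}(t₀,s) Q_j(ds) + Σ_{i,j} ∬ K_{ij}(t,s) Q_i(dt) Q_j(ds). -/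
open MeasureTheory

/-- The mixed partial derivative `∂^{i+j} K(t,s) / ∂t^i ∂s^j` of a kernel on `ℝ × ℝ`. -/
noncomputable def Kd (K : ℝ → ℝ → ℝ) (i j : ℕ) (t s : ℝ) : ℝ :=
  iteratedDeriv i (fun u => iteratedDeriv j (K u) s) t

open Function

namespace SMhelp
variable {α : Type*} [MeasurableSpace α]

lemma integrable_of_bdd {g : α → ℝ} (hg : Measurable g) {C : ℝ} (hb : ∀ x, |g x| ≤ C)
    (μ : Measure α) [IsFiniteMeasure μ] : Integrable g μ :=
  (integrable_const C).mono' hg.aestronglyMeasurable (Filter.Eventually.of_forall fun x => hb x)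

lemma jd_apply (μ : SignedMeasure α) {s : Set α} (hs : MeasurableSet s) :
    μ s = (μ.toJordanDecomposition.posPart s).toReal
      - (μ.toJordanDecomposition.negPart s).toReal := by
  conv_lhs => rw [← μ.toSignedMeasure_toJordanDecomposition]
  rw [JordanDecomposition.toSignedMeasure]
  rw [VectorMeasure.sub_apply, Measure.toSignedMeasure_apply_measurable hs,
    Measure.toSignedMeasure_apply_measurable hs]
  rfl

lemma integral_sub_eq {a b c d : Measure α} [IsFiniteMeasure a] [IsFiniteMeasure b]
    [IsFiniteMeasure c] [IsFiniteMeasure d]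
    (h : a + d = c + b) {g : α → ℝ} (ha : Integrable g a) (hb : Integrable g b)
    (hc : Integrable g c) (hd : Integrable g d) :
    (∫ x, g x ∂a) - ∫ x, g x ∂b = (∫ x, g x ∂c) - ∫ x, g x ∂d := by
  have h1 : ∫ x, g x ∂(a + d) = (∫ x, g x ∂a) + ∫ x, g x ∂d := integral_add_measure ha hd
  have h2 : ∫ x, g x ∂(c + b) = (∫ x, g x ∂c) + ∫ x, g x ∂b := integral_add_measure hc hb
  rw [h] at h1; rw [h2] at h1; linarith

lemma sInt_eq_of_repr (μ : SignedMeasure α) (c d : Measure α) [IsFiniteMeasure c]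
    [IsFiniteMeasure d]
    (h : ∀ s : Set α, MeasurableSet s → μ s = (c s).toReal - (d s).toReal)
    {g : α → ℝ} (hg : Measurable g) {C : ℝ} (hb : ∀ x, |g x| ≤ C) :
    sInt μ g = (∫ x, g x ∂c) - ∫ x, g x ∂d := by
  have key : μ.toJordanDecomposition.posPart + d = c + μ.toJordanDecomposition.negPart := by
    ext s hs
    have h1 := jd_apply μ hs
    have h2 := h s hs
    have e1 : μ.toJordanDecomposition.posPart s ≠ ⊤ := measure_ne_top _ _
    have e2 : μ.toJordanDecomposition.negPart s ≠ ⊤ := measure_ne_top _ _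
    have e3 : c s ≠ ⊤ := measure_ne_top _ _
    have e4 : d s ≠ ⊤ := measure_ne_top _ _
    rw [Measure.add_apply, Measure.add_apply]
    rw [← ENNReal.toReal_eq_toReal_iff' (by finiteness) (by finiteness)]
    rw [ENNReal.toReal_add e1 e4, ENNReal.toReal_add e3 e2]
    linarith
  exact integral_sub_eq key (integrable_of_bdd hg hb _) (integrable_of_bdd hg hb _)
    (integrable_of_bdd hg hb _) (integrable_of_bdd hg hb _)

/-- bounded measurable predicate -/
def Nice (g : α → ℝ) : Prop := Measurable g ∧ ∃ C, ∀ x, |g x| ≤ C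

lemma sInt_add (μ ν : SignedMeasure α) {g : α → ℝ} (hg : Nice g) :
    sInt (μ + ν) g = sInt μ g + sInt ν g := by
  obtain ⟨hm, C, hb⟩ := hg
  rw [sInt_eq_of_repr (μ + ν)
      (μ.toJordanDecomposition.posPart + ν.toJordanDecomposition.posPart)
      (μ.toJordanDecomposition.negPart + ν.toJordanDecomposition.negPart)
      (fun s hs => by
        rw [VectorMeasure.add_apply, jd_apply μ hs, jd_apply ν hs,
          Measure.add_apply, Measure.add_apply,
          ENNReal.toReal_add (measure_ne_top _ _) (measure_ne_top _ _),
          ENNReal.toReal_add (measure_ne_top _ _) (measure_ne_top _ _)]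
        ring) hm hb,
    integral_add_measure (integrable_of_bdd hm hb _) (integrable_of_bdd hm hb _),
    integral_add_measure (integrable_of_bdd hm hb _) (integrable_of_bdd hm hb _)]
  simp [sInt]; ring

lemma isFiniteMeasure_smul (r : ℝ) (m : Measure α) [IsFiniteMeasure m] :
    IsFiniteMeasure (ENNReal.ofReal r • m) := by
  constructor
  rw [Measure.smul_apply, smul_eq_mul]
  exact ENNReal.mul_lt_top ENNReal.ofReal_lt_top (measure_lt_top _ _)

lemma sInt_smul (r : ℝ) (μ : SignedMeasure α) {g : α → ℝ} (hg : Nice g) :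
    sInt (r • μ) g = r * sInt μ g := by
  obtain ⟨hm, C, hb⟩ := hg
  rcases le_or_gt 0 r with hr | hr
  · haveI := isFiniteMeasure_smul r μ.toJordanDecomposition.posPart
    haveI := isFiniteMeasure_smul r μ.toJordanDecomposition.negPart
    rw [sInt_eq_of_repr (r • μ)
        (ENNReal.ofReal r • μ.toJordanDecomposition.posPart)
        (ENNReal.ofReal r • μ.toJordanDecomposition.negPart)
        (fun s hs => by
          rw [VectorMeasure.smul_apply, jd_apply μ hs]
          simp [Measure.smul_apply, smul_eq_mul, ENNReal.toReal_mul,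
            ENNReal.toReal_ofReal hr]
          ring) hm hb,
      integral_smul_measure, integral_smul_measure]
    simp [sInt, ENNReal.toReal_ofReal hr]; ring
  · haveI := isFiniteMeasure_smul (-r) μ.toJordanDecomposition.posPart
    haveI := isFiniteMeasure_smul (-r) μ.toJordanDecomposition.negPart
    rw [sInt_eq_of_repr (r • μ)
        (ENNReal.ofReal (-r) • μ.toJordanDecomposition.negPart)
        (ENNReal.ofReal (-r) • μ.toJordanDecomposition.posPart)
        (fun s hs => by
          rw [VectorMeasure.smul_apply, jd_apply μ hs]
          simp [Measure.smul_apply, smul_eq_mul, ENNReal.toReal_mul,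
            ENNReal.toReal_ofReal (show (0:ℝ) ≤ -r by linarith)]
          ring) hm hb,
      integral_smul_measure, integral_smul_measure]
    simp [sInt, ENNReal.toReal_ofReal (show (0:ℝ) ≤ -r by linarith)]; ring

lemma sInt_zero {g : α → ℝ} (hg : Nice g) : sInt (0 : SignedMeasure α) g = 0 := by
  have := sInt_smul 0 0 hg
  simpa using this

lemma sInt_sum {ι : Type*} (s : Finset ι) (μ : ι → SignedMeasure α) {g : α → ℝ}
    (hg : Nice g) : sInt (∑ i ∈ s, μ i) g = ∑ i ∈ s, sInt (μ i) g := by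
  classical
  induction s using Finset.induction_on with
  | empty => simpa using sInt_zero hg
  | insert _ _ hnotmem ih =>
      rw [Finset.sum_insert hnotmem, Finset.sum_insert hnotmem, sInt_add _ _ hg, ih]

end SMhelp

namespace Sect2
variable {α : Type*} [MeasurableSpace α] {β : Type*} [MeasurableSpace β]
open SMhelp Function

lemma sInt_add_fun (μ : SignedMeasure α) {g h : α → ℝ} (hg : Nice g) (hh : Nice h) :
    sInt μ (fun x => g x + h x) = sInt μ g + sInt μ h := by
  obtain ⟨hgm, Cg, hgb⟩ := hg; obtain ⟨hhm, Ch, hhb⟩ := hh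
  unfold sInt
  rw [integral_add (integrable_of_bdd hgm hgb _) (integrable_of_bdd hhm hhb _),
    integral_add (integrable_of_bdd hgm hgb _) (integrable_of_bdd hhm hhb _)]
  ring

lemma sInt_const_mul (μ : SignedMeasure α) (r : ℝ) (g : α → ℝ) :
    sInt μ (fun x => r * g x) = r * sInt μ g := by
  unfold sInt; rw [integral_const_mul, integral_const_mul]; ring

lemma nice_const_mul (r : ℝ) {g : α → ℝ} (hg : Nice g) : Nice (fun x => r * g x) := by
  obtain ⟨hm, C, hb⟩ := hg
  exact ⟨(measurable_const.mul hm), |r| * C, fun x => by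
    rw [abs_mul]; exact mul_le_mul_of_nonneg_left (hb x) (abs_nonneg r)⟩

lemma nice_sum {ι : Type*} (s : Finset ι) {g : ι → α → ℝ} (hg : ∀ i, Nice (g i)) :
    Nice (fun x => ∑ i ∈ s, g i x) := by
  classical
  induction s using Finset.induction_on with
  | empty =>
      refine ⟨?_, 0, fun x => by simp⟩
      simp only [Finset.sum_empty]; exact measurable_const
  | @insert a s hnot ih =>
      obtain ⟨hm, C, hb⟩ := ih
      obtain ⟨hm', C', hb'⟩ := hg a
      refine ⟨?_, C' + C, fun x => ?_⟩
      · simp only [Finset.sum_insert hnot]; exact hm'.add hm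
      · simp only [Finset.sum_insert hnot]
        exact (abs_add_le _ _).trans (add_le_add (hb' x) (hb x))

lemma sInt_sum_fun {ι : Type*} (s : Finset ι) (μ : SignedMeasure α) {g : ι → α → ℝ}
    (hg : ∀ i, Nice (g i)) :
    sInt μ (fun x => ∑ i ∈ s, g i x) = ∑ i ∈ s, sInt μ (g i) := by
  classical
  induction s using Finset.induction_on with
  | empty =>
      simp only [Finset.sum_empty]
      unfold sInt; simp
  | @insert a s hnot ih =>
      simp only [Finset.sum_insert hnot]
      rw [← ih, ← sInt_add_fun μ (hg a) (nice_sum s hg)]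

/-- bound on parametric integral + measurability -/
lemma nice_int_param {F : α → β → ℝ} (hm : Measurable (uncurry F)) {C : ℝ}
    (hb : ∀ x y, |F x y| ≤ C) (m : Measure β) [IsFiniteMeasure m] :
    Measurable (fun x => ∫ y, F x y ∂m) ∧
      ∀ x, |∫ y, F x y ∂m| ≤ C * (m Set.univ).toReal := by
  constructor
  · exact (hm.stronglyMeasurable.integral_prod_right).measurable
  · intro x
    have := norm_integral_le_of_norm_le_const (μ := m) (f := fun y => F x y) (C := C)
      (Filter.Eventually.of_forall fun y => by rw [Real.norm_eq_abs]; exact hb x y)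
    simpa [Real.norm_eq_abs, measureReal_def] using this

lemma nice_sInt_param {F : α → β → ℝ} (hm : Measurable (uncurry F)) {C : ℝ}
    (hb : ∀ x y, |F x y| ≤ C) (ν : SignedMeasure β) :
    Nice (fun x => sInt ν (fun y => F x y)) := by
  obtain ⟨m1, b1⟩ := nice_int_param hm hb ν.toJordanDecomposition.posPart
  obtain ⟨m2, b2⟩ := nice_int_param hm hb ν.toJordanDecomposition.negPart
  refine ⟨m1.sub m2, C * (ν.toJordanDecomposition.posPart Set.univ).toReal
    + C * (ν.toJordanDecomposition.negPart Set.univ).toReal, fun x => ?_⟩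
  exact (abs_sub _ _).trans (add_le_add (b1 x) (b2 x))

/-- Fubini for sInt with bounded measurable kernel -/
lemma sInt_swap (μ : SignedMeasure α) (ν : SignedMeasure β) {F : α → β → ℝ}
    (hm : Measurable (uncurry F)) {C : ℝ} (hb : ∀ x y, |F x y| ≤ C) :
    sInt μ (fun x => sInt ν (fun y => F x y))
      = sInt ν (fun y => sInt μ (fun x => F x y)) := by
  have hm' : Measurable (uncurry fun y x => F x y) :=
    hm.comp measurable_swap
  have hb' : ∀ y x, |F x y| ≤ C := fun y x => hb x y
  have swap : ∀ (a : Measure α) (b : Measure β), IsFiniteMeasure a → IsFiniteMeasure b →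
      ∫ x, ∫ y, F x y ∂b ∂a = ∫ y, ∫ x, F x y ∂a ∂b := by
    intro a b ha hb'f
    exact integral_integral_swap (integrable_of_bdd (hm.comp measurable_id)
      (fun z => hb z.1 z.2) (a.prod b))
  have expand : ∀ (a : Measure α), IsFiniteMeasure a →
      ∫ x, ((∫ y, F x y ∂ν.toJordanDecomposition.posPart)
          - ∫ y, F x y ∂ν.toJordanDecomposition.negPart) ∂a
        = (∫ x, ∫ y, F x y ∂ν.toJordanDecomposition.posPart ∂a)
          - ∫ x, ∫ y, F x y ∂ν.toJordanDecomposition.negPart ∂a := by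
    intro a ha
    obtain ⟨mp, bp⟩ := nice_int_param hm hb ν.toJordanDecomposition.posPart
    obtain ⟨mn, bn⟩ := nice_int_param hm hb ν.toJordanDecomposition.negPart
    exact integral_sub (integrable_of_bdd mp bp a) (integrable_of_bdd mn bn a)
  have expand' : ∀ (b : Measure β), IsFiniteMeasure b →
      ∫ y, ((∫ x, F x y ∂μ.toJordanDecomposition.posPart)
          - ∫ x, F x y ∂μ.toJordanDecomposition.negPart) ∂b
        = (∫ y, ∫ x, F x y ∂μ.toJordanDecomposition.posPart ∂b)
          - ∫ y, ∫ x, F x y ∂μ.toJordanDecomposition.negPart ∂b := by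
    intro b hbf
    obtain ⟨mp, bp⟩ := nice_int_param hm' hb' μ.toJordanDecomposition.posPart
    obtain ⟨mn, bn⟩ := nice_int_param hm' hb' μ.toJordanDecomposition.negPart
    exact integral_sub (integrable_of_bdd mp bp b) (integrable_of_bdd mn bn b)
  simp only [sInt]
  rw [expand _ inferInstance, expand _ inferInstance,
    expand' _ inferInstance, expand' _ inferInstance,
    swap _ _ inferInstance inferInstance, swap _ _ inferInstance inferInstance,
    swap _ _ inferInstance inferInstance, swap _ _ inferInstance inferInstance]
  ring

end Sect2

namespace KdHelp

lemma contDiff_deriv_fst {F : ℝ → ℝ → ℝ} {n : ℕ} (h : ContDiff ℝ ((n + 1 : ℕ)) (uncurry F)) :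
    ContDiff ℝ (n : ℕ) (fun p : ℝ × ℝ => deriv (fun u => F u p.2) p.1) := by
  have hdiff : Differentiable ℝ (uncurry F) := h.differentiable (by simp)
  have key : ∀ p : ℝ × ℝ, deriv (fun u => F u p.2) p.1 = fderiv ℝ (uncurry F) p ((1 : ℝ), (0 : ℝ)) := by
    intro p
    have h1 : HasDerivAt (fun u : ℝ => (u, p.2)) ((1 : ℝ), (0 : ℝ)) p.1 :=
      (hasDerivAt_id p.1).prodMk (hasDerivAt_const p.1 p.2)
    have h2 : HasFDerivAt (uncurry F) (fderiv ℝ (uncurry F) p) ((fun u : ℝ => (u, p.2)) p.1) := by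
      simpa using (hdiff p).hasFDerivAt
    have h3 := h2.comp_hasDerivAt p.1 h1
    exact h3.deriv
  have hfd : ContDiff ℝ (n : ℕ) (fun p : ℝ × ℝ => fderiv ℝ (uncurry F) p ((1 : ℝ), (0 : ℝ))) := by
    exact (ContinuousLinearMap.apply ℝ ℝ ((1 : ℝ), (0 : ℝ))).contDiff.comp
      (h.fderiv_right (by exact_mod_cast le_refl (n + 1)))
  have e : (fun p : ℝ × ℝ => deriv (fun u => F u p.2) p.1)
      = fun p : ℝ × ℝ => fderiv ℝ (uncurry F) p ((1 : ℝ), (0 : ℝ)) := funext key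
  rw [e]; exact hfd

lemma contDiff_deriv_snd {F : ℝ → ℝ → ℝ} {n : ℕ} (h : ContDiff ℝ ((n + 1 : ℕ)) (uncurry F)) :
    ContDiff ℝ (n : ℕ) (fun p : ℝ × ℝ => deriv (fun v => F p.1 v) p.2) := by
  have hdiff : Differentiable ℝ (uncurry F) := h.differentiable (by simp)
  have key : ∀ p : ℝ × ℝ, deriv (fun v => F p.1 v) p.2 = fderiv ℝ (uncurry F) p ((0 : ℝ), (1 : ℝ)) := by
    intro p
    have h1 : HasDerivAt (fun v : ℝ => (p.1, v)) ((0 : ℝ), (1 : ℝ)) p.2 :=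
      (hasDerivAt_const p.2 p.1).prodMk (hasDerivAt_id p.2)
    have h2 : HasFDerivAt (uncurry F) (fderiv ℝ (uncurry F) p) ((fun v : ℝ => (p.1, v)) p.2) := by
      simpa using (hdiff p).hasFDerivAt
    have h3 := h2.comp_hasDerivAt p.2 h1
    exact h3.deriv
  have hfd : ContDiff ℝ (n : ℕ) (fun p : ℝ × ℝ => fderiv ℝ (uncurry F) p ((0 : ℝ), (1 : ℝ))) := by
    exact (ContinuousLinearMap.apply ℝ ℝ ((0 : ℝ), (1 : ℝ))).contDiff.comp
      (h.fderiv_right (by exact_mod_cast le_refl (n + 1)))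
  have e : (fun p : ℝ × ℝ => deriv (fun v => F p.1 v) p.2)
      = fun p : ℝ × ℝ => fderiv ℝ (uncurry F) p ((0 : ℝ), (1 : ℝ)) := funext key
  rw [e]; exact hfd

lemma contDiff_Kd0 (K : ℝ → ℝ → ℝ) (N : ℕ) (hK : ContDiff ℝ (N : ℕ) (uncurry K)) :
    ∀ j : ℕ, j ≤ N → ContDiff ℝ ((N - j : ℕ)) (uncurry (Kd K 0 j)) := by
  intro j
  induction j with
  | zero =>
      intro _
      have : uncurry (Kd K 0 0) = uncurry K := by
        funext p; simp [Kd, uncurry, iteratedDeriv_zero]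
      simpa [this]
  | succ j ih =>
      intro hj
      have prev := ih (Nat.le_of_succ_le hj)
      have harith : N - j = (N - (j + 1)) + 1 := by omega
      rw [harith] at prev
      have step := contDiff_deriv_snd prev
      have : uncurry (Kd K 0 (j + 1))
          = fun p : ℝ × ℝ => deriv (fun v => Kd K 0 j p.1 v) p.2 := by
        funext p
        simp [Kd, uncurry, iteratedDeriv_zero, iteratedDeriv_succ]
      rw [this]
      exact step

lemma contDiff_Kd (K : ℝ → ℝ → ℝ) (N : ℕ) (hK : ContDiff ℝ (N : ℕ) (uncurry K)) :
    ∀ i j : ℕ, i + j ≤ N → ContDiff ℝ ((N - j - i : ℕ)) (uncurry (Kd K i j)) := by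
  intro i
  induction i with
  | zero => intro j hj; simpa using contDiff_Kd0 K N hK j (by omega)
  | succ i ih =>
      intro j hj
      have prev := ih j (by omega)
      have harith : N - j - i = (N - j - (i + 1)) + 1 := by omega
      rw [harith] at prev
      have step := contDiff_deriv_fst prev
      have : uncurry (Kd K (i + 1) j)
          = fun p : ℝ × ℝ => deriv (fun u => Kd K i j u p.2) p.1 := by
        funext p
        simp only [Kd, uncurry, iteratedDeriv_succ]
      rw [this]
      exact step

lemma continuous_Kd (K : ℝ → ℝ → ℝ) (N : ℕ) (hK : ContDiff ℝ (N : ℕ) (uncurry K))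
    (i j : ℕ) (h : i + j ≤ N) : Continuous (uncurry (Kd K i j)) :=
  (contDiff_Kd K N hK i j h).continuous

end KdHelp


open Function SMhelp Sect2


/-- Theorem 3.1, MSE formula.  Under the hypotheses of Theorem 3.1, with
`D` the covariance matrix of the BLUE, the minimal mean squared error equals
`M(Q*) = K_{pp}(t₀,t₀) + cᵀ D f^{(p)}(t₀) − Σ_j ∫_{T_j} K_{pj}(t₀,t) Q*_j(dt)`. -/
theorem blup_derivatives_mse_value {q m : ℕ}
    (K : ℝ → ℝ → ℝ) (hK : ContDiff ℝ (2 * q : ℕ) (Function.uncurry K))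
    (hKdbd : ∀ i j : Fin (q + 1), ∃ C, ∀ t s, |Kd K i.1 j.1 t s| ≤ C)
    (T : Fin (q + 1) → Set ℝ) (hT : ∀ i, MeasurableSet (T i))
    (p : Fin (q + 1)) (t0 : ℝ) (ht0 : t0 ∉ T p)
    (f : ℝ → Fin m → ℝ) (hf : ∀ k, ContDiff ℝ (q : ℕ) fun t => f t k)
    (hfbd : ∀ j : Fin (q + 1), ∃ C, ∀ t k, |iteratedDeriv j.1 (fun u => f u k) t| ≤ C)
    (hpos : ∀ R : ∀ i, SignedMeasure (T i),
      0 ≤ ∑ i, ∑ j, sInt (R i) fun t => sInt (R j) fun s => Kd K i.1 j.1 t.1 s.1)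
    (G : Fin m → ∀ j, SignedMeasure (T j)) (D : Fin m → Fin m → ℝ)
    (hG1 : ∀ k l, (∑ j, sInt (G l j) fun t => iteratedDeriv j.1 (fun u => f u k) t.1)
      = if k = l then 1 else 0)
    (hG2 : ∀ (i : Fin (q + 1)) (s : T i) (k : Fin m),
      (∑ j, sInt (G k j) fun t => Kd K j.1 i.1 t.1 s.1)
        = ∑ l, D k l * iteratedDeriv i.1 (fun u => f u l) s.1)
    -- `D` is the covariance matrix of the BLUE:
    (hD : ∀ k l, D k l
      = ∑ i, ∑ j, sInt (G k i) fun t => sInt (G l j) fun s => Kd K i.1 j.1 t.1 s.1)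
    (ζ : ∀ j, SignedMeasure (T j))
    (hζ : ∀ (i : Fin (q + 1)) (s : T i),
      (∑ j, sInt (ζ j) fun t => Kd K j.1 i.1 t.1 s.1) = Kd K p.1 i.1 t0 s.1)
    (c : Fin m → ℝ)
    (hc : ∀ k, c k = iteratedDeriv p.1 (fun u => f u k) t0
      - ∑ j, sInt (ζ j) fun t => iteratedDeriv j.1 (fun u => f u k) t.1)
    (Qstar : ∀ j, SignedMeasure (T j))
    (hQstar : ∀ j, Qstar j = ζ j + ∑ k, c k • G k j)
    (M : (∀ j, SignedMeasure (T j)) → ℝ)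
    (hM : ∀ Q : ∀ j, SignedMeasure (T j),
      M Q = Kd K p.1 p.1 t0 t0
        - 2 * ∑ j, sInt (Q j) (fun s => Kd K p.1 j.1 t0 s.1)
        + ∑ i, ∑ j, sInt (Q i) fun t => sInt (Q j) fun s => Kd K i.1 j.1 t.1 s.1) :
    M Qstar = Kd K p.1 p.1 t0 t0
      + (∑ k, c k * ∑ l, D k l * iteratedDeriv p.1 (fun u => f u l) t0)
      - ∑ j, sInt (Qstar j) fun t => Kd K p.1 j.1 t0 t.1 := by
  classical
  -- continuity of the kernels
  have hKc : ∀ i j : Fin (q + 1), Continuous (Function.uncurry (Kd K i.1 j.1)) := by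
    intro i j
    exact KdHelp.continuous_Kd K (2 * q) hK i.1 j.1 (by omega)
  -- measurability on the subtypes
  have hKm : ∀ i j : Fin (q + 1),
      Measurable (uncurry fun (t : T i) (s : T j) => Kd K i.1 j.1 t.1 s.1) := fun i j =>
    ((hKc i j).comp ((continuous_subtype_val.comp continuous_fst).prodMk
      (continuous_subtype_val.comp continuous_snd))).measurable
  have hKm' : ∀ i j : Fin (q + 1),
      Measurable (uncurry fun (s : T j) (t : T i) => Kd K i.1 j.1 t.1 s.1) := fun i j =>
    ((hKc i j).comp ((continuous_subtype_val.comp continuous_snd).prodMk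
      (continuous_subtype_val.comp continuous_fst))).measurable
  have niceK1 : ∀ (i j : Fin (q + 1)) (s : ℝ),
      Nice fun t : T i => Kd K i.1 j.1 t.1 s := by
    intro i j s
    obtain ⟨C, hC⟩ := hKdbd i j
    exact ⟨((hKc i j).comp (continuous_subtype_val.prodMk continuous_const)).measurable,
      C, fun t => hC t.1 s⟩
  have niceK2 : ∀ (i j : Fin (q + 1)) (t : ℝ),
      Nice fun s : T j => Kd K i.1 j.1 t s.1 := by
    intro i j t
    obtain ⟨C, hC⟩ := hKdbd i j
    exact ⟨((hKc i j).comp (continuous_const.prodMk continuous_subtype_val)).measurable,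
      C, fun s => hC t s.1⟩
  have niceF : ∀ (j : Fin (q + 1)) (l : Fin m),
      Nice fun t : T j => iteratedDeriv j.1 (fun u => f u l) t.1 := by
    intro j l
    obtain ⟨C, hC⟩ := hfbd j
    refine ⟨?_, C, fun t => hC t.1 l⟩
    exact ((ContDiff.continuous_iteratedDeriv j.1 (hf l)
      (by exact_mod_cast (by omega : j.1 ≤ q))).comp continuous_subtype_val).measurable
  -- decomposition of `sInt` over `Qstar`
  have hQ : ∀ (i : Fin (q + 1)) (g : T i → ℝ), Nice g →
      sInt (Qstar i) g = sInt (ζ i) g + ∑ k, c k * sInt (G k i) g := by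
    intro i g hg
    rw [hQstar i, sInt_add _ _ hg, sInt_sum _ _ hg]
    exact congrArg _ (Finset.sum_congr rfl fun k _ => sInt_smul _ _ hg)
  -- Step A: pointwise identity for the combined measure
  have hsum : ∀ (j : Fin (q + 1)) (s : T j),
      (∑ i, sInt (Qstar i) fun t => Kd K i.1 j.1 t.1 s.1)
        = Kd K p.1 j.1 t0 s.1
          + ∑ k, c k * ∑ l, D k l * iteratedDeriv j.1 (fun u => f u l) s.1 := by
    intro j s
    have e : ∀ i : Fin (q + 1), sInt (Qstar i) (fun t => Kd K i.1 j.1 t.1 s.1)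
        = sInt (ζ i) (fun t => Kd K i.1 j.1 t.1 s.1)
          + ∑ k, c k * sInt (G k i) (fun t => Kd K i.1 j.1 t.1 s.1) :=
      fun i => hQ i _ (niceK1 i j s.1)
    rw [Finset.sum_congr rfl fun i _ => e i, Finset.sum_add_distrib, hζ j s, Finset.sum_comm]
    congr 1
    refine Finset.sum_congr rfl fun k _ => ?_
    rw [← Finset.mul_sum, hG2 j s k]
  -- Step C: the representation property of `Qstar`
  have hC2 : ∀ l : Fin m,
      (∑ j, sInt (Qstar j) fun t => iteratedDeriv j.1 (fun u => f u l) t.1)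
        = iteratedDeriv p.1 (fun u => f u l) t0 := by
    intro l
    have e : ∀ j : Fin (q + 1),
        sInt (Qstar j) (fun t => iteratedDeriv j.1 (fun u => f u l) t.1)
          = sInt (ζ j) (fun t => iteratedDeriv j.1 (fun u => f u l) t.1)
            + ∑ k, c k * sInt (G k j) (fun t => iteratedDeriv j.1 (fun u => f u l) t.1) :=
      fun j => hQ j _ (niceF j l)
    rw [Finset.sum_congr rfl fun j _ => e j, Finset.sum_add_distrib, Finset.sum_comm]
    have h1 : (∑ j, sInt (ζ j) fun t => iteratedDeriv j.1 (fun u => f u l) t.1)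
        = iteratedDeriv p.1 (fun u => f u l) t0 - c l := by
      have := hc l; linarith
    have h2 : (∑ k, ∑ j, c k * sInt (G k j)
        fun t => iteratedDeriv j.1 (fun u => f u l) t.1) = c l := by
      have e2 : ∀ k : Fin m, (∑ j, c k * sInt (G k j)
          fun t => iteratedDeriv j.1 (fun u => f u l) t.1)
            = c k * (if l = k then 1 else 0) := by
        intro k; rw [← Finset.mul_sum, hG1 l k]
      rw [Finset.sum_congr rfl fun k _ => e2 k]
      simp
    rw [h1, h2]; ring
  -- Step B: Fubini and combination
  have hB : (∑ i, ∑ j, sInt (Qstar i) fun t => sInt (Qstar j)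
        fun s => Kd K i.1 j.1 t.1 s.1)
      = (∑ j, sInt (Qstar j) fun t => Kd K p.1 j.1 t0 t.1)
        + ∑ k, c k * ∑ l, D k l * iteratedDeriv p.1 (fun u => f u l) t0 := by
    have swapped : ∀ i j : Fin (q + 1),
        sInt (Qstar i) (fun t => sInt (Qstar j) fun s => Kd K i.1 j.1 t.1 s.1)
          = sInt (Qstar j) (fun s => sInt (Qstar i) fun t => Kd K i.1 j.1 t.1 s.1) := by
      intro i j
      obtain ⟨C, hC⟩ := hKdbd i j
      exact sInt_swap _ _ (hKm i j) (fun t s => hC t.1 s.1)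
    calc (∑ i, ∑ j, sInt (Qstar i) fun t => sInt (Qstar j)
            fun s => Kd K i.1 j.1 t.1 s.1)
        = ∑ i, ∑ j, sInt (Qstar j)
            (fun s => sInt (Qstar i) fun t => Kd K i.1 j.1 t.1 s.1) :=
          Finset.sum_congr rfl fun i _ => Finset.sum_congr rfl fun j _ => swapped i j
      _ = ∑ j, ∑ i, sInt (Qstar j)
            (fun s => sInt (Qstar i) fun t => Kd K i.1 j.1 t.1 s.1) := Finset.sum_comm
      _ = ∑ j, sInt (Qstar j)
            (fun s => ∑ i, sInt (Qstar i) fun t => Kd K i.1 j.1 t.1 s.1) := by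
          refine Finset.sum_congr rfl fun j _ => ?_
          refine (sInt_sum_fun Finset.univ (Qstar j) fun i => ?_).symm
          obtain ⟨C, hC⟩ := hKdbd i j
          exact nice_sInt_param (hKm' i j) (fun s t => hC t.1 s.1) (Qstar i)
      _ = ∑ j, sInt (Qstar j) (fun s : T j => Kd K p.1 j.1 t0 s.1
            + ∑ k, c k * ∑ l, D k l * iteratedDeriv j.1 (fun u => f u l) s.1) := by
          refine Finset.sum_congr rfl fun j _ => ?_
          congr 1; funext s; exact hsum j s
      _ = ∑ j, (sInt (Qstar j) (fun s : T j => Kd K p.1 j.1 t0 s.1)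
            + ∑ k, c k * ∑ l, D k l * sInt (Qstar j)
              (fun s : T j => iteratedDeriv j.1 (fun u => f u l) s.1)) := by
          refine Finset.sum_congr rfl fun j _ => ?_
          have nice2 : ∀ k : Fin m, Nice (fun s : T j =>
              c k * ∑ l, D k l * iteratedDeriv j.1 (fun u => f u l) s.1) := fun k =>
            nice_const_mul _ (nice_sum Finset.univ fun l => nice_const_mul _ (niceF j l))
          rw [sInt_add_fun _ (niceK2 p j t0) (nice_sum Finset.univ nice2)]
          congr 1
          rw [sInt_sum_fun Finset.univ _ nice2]
          refine Finset.sum_congr rfl fun k _ => ?_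
          rw [sInt_const_mul]
          congr 1
          rw [sInt_sum_fun Finset.univ _
            (fun l => nice_const_mul _ (niceF j l))]
          refine Finset.sum_congr rfl fun l _ => ?_
          rw [sInt_const_mul]
      _ = (∑ j, sInt (Qstar j) fun t => Kd K p.1 j.1 t0 t.1)
            + ∑ k, c k * ∑ l, D k l * iteratedDeriv p.1 (fun u => f u l) t0 := by
          rw [Finset.sum_add_distrib]
          congr 1
          rw [Finset.sum_comm]
          refine Finset.sum_congr rfl fun k _ => ?_
          rw [← Finset.mul_sum]
          congr 1
          rw [Finset.sum_comm]
          refine Finset.sum_congr rfl fun l _ => ?_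
          rw [← Finset.mul_sum, hC2 l]
  rw [hM Qstar]
  linarith [hB]
end

section
/- (Appendix, Brownian motion, location scale model.) Let 0 < A < B < t₀ and K(t,s) = min(t,s). Then for every finite signed measure Q on [A,B] with Q([A,B]) = 1, one has t₀ − 2 ∫_{[A,B]} min(t, t₀) Q(dt) + ∬_{[A,B]×[A,B]} min(t,s) Q(dt)Q(ds) ≥ t₀ − B, with equality for Q = δ_B. In other words, in the location scale model y(t) = θ + ε(t) with Brownian motion error observed on [A,B], the BLUP of y(t₀) is ŷ(t₀) = y(B) and its mean squared error is t₀ − B. -/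
open MeasureTheory
open scoped ENNReal

namespace BlupAux

open Set ENNReal

variable {A B : ℝ}

/-- The double lintegral of `min` against two measures on `[A,B]`. -/
noncomputable def II (μ ν : Measure (Set.Icc A B)) : ℝ≥0∞ :=
  ∫⁻ t, ∫⁻ s, ENNReal.ofReal (min t.1 s.1) ∂ν ∂μ

lemma meas_min :
    Measurable fun p : (Set.Icc A B) × (Set.Icc A B) => ENNReal.ofReal (min p.1.1 p.2.1) :=
  ((measurable_subtype_coe.comp measurable_fst).min
    (measurable_subtype_coe.comp measurable_snd)).ennreal_ofReal

lemma anti (μ : Measure (Set.Icc A B)) :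
    Antitone fun u : ℝ => μ {t : Set.Icc A B | u < t.1} :=
  fun u v huv => measure_mono fun t ht => huv.trans_lt ht

lemma inner_meas (ν : Measure (Set.Icc A B)) [SFinite ν] :
    Measurable fun t : Set.Icc A B => ∫⁻ s, ENNReal.ofReal (min t.1 s.1) ∂ν :=
  Measurable.lintegral_prod_right' (f := fun p : (Set.Icc A B) × (Set.Icc A B) =>
    ENNReal.ofReal (min p.1.1 p.2.1)) meas_min

lemma II_rep (hA : 0 < A) (μ ν : Measure (Set.Icc A B)) [IsFiniteMeasure μ] [IsFiniteMeasure ν] :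
    II μ ν = ∫⁻ u in Set.Ioi (0:ℝ),
      μ {t : Set.Icc A B | u < t.1} * ν {s : Set.Icc A B | u < s.1} := by
  set F : Set.Icc A B → ℝ → ℝ≥0∞ := fun t u =>
    Set.indicator {t' : Set.Icc A B | u < t'.1}
      (fun _ => ν {s : Set.Icc A B | u < s.1}) t with hFdef
  have hF : ∀ (t : Set.Icc A B) (u : ℝ), ν {s : Set.Icc A B | u < min t.1 s.1} = F t u := by
    intro t u
    by_cases h : u < t.1
    · have ht : t ∈ {t' : Set.Icc A B | u < t'.1} := h
      rw [hFdef]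
      simp only
      rw [Set.indicator_of_mem ht]
      congr 1
      ext s
      simp [lt_min_iff, h]
    · have ht : t ∉ {t' : Set.Icc A B | u < t'.1} := h
      rw [hFdef]
      simp only
      rw [Set.indicator_of_notMem ht]
      have he : {s : Set.Icc A B | u < min t.1 s.1} = ∅ := by
        ext s
        simp only [Set.mem_setOf_eq, Set.mem_empty_iff_false, iff_false, lt_min_iff]
        tauto
      rw [he]
      exact measure_empty
  have huncurry : Measurable (Function.uncurry F) := by
    have heq : Function.uncurry F = Set.indicator {p : (Set.Icc A B) × ℝ | p.2 < p.1.1}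
        (fun p => ν {s : Set.Icc A B | p.2 < s.1}) := by
      funext p
      rcases p with ⟨t, u⟩
      by_cases h : u < t.1
      · have h1 : t ∈ {t' : Set.Icc A B | u < t'.1} := h
        have h2 : ((t, u) : (Set.Icc A B) × ℝ) ∈ {p : (Set.Icc A B) × ℝ | p.2 < p.1.1} := h
        show F t u = _
        rw [hFdef]
        simp only
        rw [Set.indicator_of_mem h1, Set.indicator_of_mem h2]
      · have h1 : t ∉ {t' : Set.Icc A B | u < t'.1} := h
        have h2 : ((t, u) : (Set.Icc A B) × ℝ) ∉ {p : (Set.Icc A B) × ℝ | p.2 < p.1.1} := h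
        show F t u = _
        rw [hFdef]
        simp only
        rw [Set.indicator_of_notMem h1, Set.indicator_of_notMem h2]
    rw [heq]
    exact Measurable.indicator ((anti ν).measurable.comp measurable_snd)
      (measurableSet_lt measurable_snd (measurable_subtype_coe.comp measurable_fst))
  have step1 : II μ ν = ∫⁻ t, (∫⁻ u in Set.Ioi (0:ℝ), F t u) ∂μ := by
    unfold II
    refine lintegral_congr fun t => ?_
    rw [lintegral_eq_lintegral_meas_lt ν
      (Filter.Eventually.of_forall fun s => le_min (hA.le.trans t.2.1) (hA.le.trans s.2.1))
      ((measurable_const.min measurable_subtype_coe).aemeasurable)]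
    exact lintegral_congr fun u => hF t u
  rw [step1, lintegral_lintegral_swap huncurry.aemeasurable]
  refine lintegral_congr fun u => ?_
  rw [hFdef]
  simp only
  rw [lintegral_indicator_const (measurableSet_lt measurable_const measurable_subtype_coe)]
  exact mul_comm _ _

lemma II_symm (hA : 0 < A) (μ ν : Measure (Set.Icc A B))
    [IsFiniteMeasure μ] [IsFiniteMeasure ν] : II μ ν = II ν μ := by
  rw [II_rep hA, II_rep hA]
  exact lintegral_congr fun u => mul_comm _ _

lemma inner_le (ν : Measure (Set.Icc A B)) (t : Set.Icc A B) :
    ∫⁻ s, ENNReal.ofReal (min t.1 s.1) ∂ν ≤ ENNReal.ofReal B * ν Set.univ := by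
  calc ∫⁻ s, ENNReal.ofReal (min t.1 s.1) ∂ν
      ≤ ∫⁻ _, ENNReal.ofReal B ∂ν :=
        lintegral_mono fun s => ENNReal.ofReal_le_ofReal ((min_le_right _ _).trans s.2.2)
    _ = ENNReal.ofReal B * ν Set.univ := lintegral_const _

lemma inner_ne_top (ν : Measure (Set.Icc A B)) [IsFiniteMeasure ν] (t : Set.Icc A B) :
    ∫⁻ s, ENNReal.ofReal (min t.1 s.1) ∂ν ≠ ∞ :=
  ne_of_lt ((inner_le ν t).trans_lt
    (ENNReal.mul_lt_top ENNReal.ofReal_lt_top (measure_lt_top _ _)))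

lemma II_ne_top (μ ν : Measure (Set.Icc A B))
    [IsFiniteMeasure μ] [IsFiniteMeasure ν] : II μ ν ≠ ∞ := by
  refine ne_of_lt (lt_of_le_of_lt (lintegral_mono fun t => inner_le ν t) ?_)
  rw [lintegral_const]
  exact ENNReal.mul_lt_top
    (ENNReal.mul_lt_top ENNReal.ofReal_lt_top (measure_lt_top _ _)) (measure_lt_top _ _)

lemma two_mul_le_sq_add_sq (a b : ℝ≥0∞) : 2 * (a * b) ≤ a * a + b * b := by
  rcases le_total a b with h | h
  · obtain ⟨c, rfl⟩ := exists_add_of_le h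
    calc 2 * (a * (a + c)) ≤ 2 * (a * (a + c)) + c * c := le_self_add
      _ = a * a + (a + c) * (a + c) := by ring
  · obtain ⟨c, rfl⟩ := exists_add_of_le h
    calc 2 * ((b + c) * b) ≤ 2 * ((b + c) * b) + c * c := le_self_add
      _ = (b + c) * (b + c) + b * b := by ring

lemma II_key (hA : 0 < A) (μ ν : Measure (Set.Icc A B))
    [IsFiniteMeasure μ] [IsFiniteMeasure ν] :
    2 * II μ ν ≤ II μ μ + II ν ν := by
  rw [II_rep hA, II_rep hA, II_rep hA,
    ← lintegral_const_mul' 2 _ (by norm_num),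
    ← lintegral_add_left (f := fun u => μ {t : Set.Icc A B | u < t.1} * μ {s : Set.Icc A B | u < s.1}) (((anti μ).measurable.mul (anti μ).measurable))]
  exact lintegral_mono fun u => two_mul_le_sq_add_sq _ _

lemma II_add_left (μ μ' ν : Measure (Set.Icc A B)) :
    II (μ + μ') ν = II μ ν + II μ' ν :=
  lintegral_add_measure _ _ _

lemma II_add_right (μ ν ν' : Measure (Set.Icc A B)) [SFinite ν] :
    II μ (ν + ν') = II μ ν + II μ ν' := by
  unfold II
  simp_rw [lintegral_add_measure]
  exact lintegral_add_left (inner_meas ν) _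

/-- The inner Bochner integral equals the `toReal` of the inner lintegral. -/
lemma inner_eq (hA : 0 < A) (ν : Measure (Set.Icc A B)) (t : Set.Icc A B) :
    ∫ s, min t.1 s.1 ∂ν = (∫⁻ s, ENNReal.ofReal (min t.1 s.1) ∂ν).toReal :=
  integral_eq_lintegral_of_nonneg_ae
    (Filter.Eventually.of_forall fun s => le_min (hA.le.trans t.2.1) (hA.le.trans s.2.1))
    ((measurable_const.min measurable_subtype_coe).aestronglyMeasurable)

lemma integral_min_eq (hA : 0 < A) (hB : 0 ≤ B) (μ ν : Measure (Set.Icc A B))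
    [IsFiniteMeasure μ] [IsFiniteMeasure ν] :
    ∫ t, (∫ s, min t.1 s.1 ∂ν) ∂μ = (II μ ν).toReal := by
  have heq : (fun t : Set.Icc A B => ∫ s, min t.1 s.1 ∂ν)
      = fun t => (∫⁻ s, ENNReal.ofReal (min t.1 s.1) ∂ν).toReal := funext (inner_eq hA ν)
  rw [heq]
  rw [integral_eq_lintegral_of_nonneg_ae
    (Filter.Eventually.of_forall fun t => ENNReal.toReal_nonneg)
    ((inner_meas ν).ennreal_toReal.aestronglyMeasurable)]
  congr 1
  exact lintegral_congr fun t => ENNReal.ofReal_toReal (inner_ne_top ν t)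

lemma integrable_inner (hA : 0 < A) (hB : 0 ≤ B) (μ ν : Measure (Set.Icc A B))
    [IsFiniteMeasure μ] [IsFiniteMeasure ν] :
    Integrable (fun t : Set.Icc A B => ∫ s, min t.1 s.1 ∂ν) μ := by
  have heq : (fun t : Set.Icc A B => ∫ s, min t.1 s.1 ∂ν)
      = fun t => (∫⁻ s, ENNReal.ofReal (min t.1 s.1) ∂ν).toReal := funext (inner_eq hA ν)
  rw [heq]
  refine ⟨(inner_meas ν).ennreal_toReal.aestronglyMeasurable,
    HasFiniteIntegral.of_bounded (C := (ENNReal.ofReal B * ν Set.univ).toReal)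
      (Filter.Eventually.of_forall fun t => ?_)⟩
  rw [Real.norm_eq_abs, abs_of_nonneg ENNReal.toReal_nonneg]
  refine ENNReal.toReal_mono ?_ ?_
  · exact ENNReal.mul_ne_top ENNReal.ofReal_ne_top (measure_ne_top _ _)
  · refine (lintegral_mono fun s => ENNReal.ofReal_le_ofReal
      ((min_le_right _ _).trans s.2.2)).trans (le_of_eq (lintegral_const _))

end BlupAux

open BlupAux

/-- Appendix, Brownian motion, location scale model.  For
`0 < A < B < t₀` and `K(t,s) = min(t,s)`, every finite signed measure `Q` on `[A,B]`
of total mass one satisfies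
`t₀ − 2∫ min(t,t₀) Q(dt) + ∬ min(t,s) Q(dt)Q(ds) ≥ t₀ − B`, with equality for `Q = δ_B`:
the BLUP of `y(t₀)` is `y(B)` with mean squared error `t₀ − B`. -/
theorem brownian_location_scale_blup (A B t0 : ℝ)
    (hA : 0 < A) (hAB : A < B) (hBt0 : B < t0) :
    (∀ Q : SignedMeasure (Set.Icc A B), Q Set.univ = 1 →
      t0 - B ≤ t0 - 2 * (sInt Q fun t => min t.1 t0)
        + (sInt Q fun t => sInt Q fun s => min t.1 s.1)) ∧
    (∀ Qδ : SignedMeasure (Set.Icc A B),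
      Qδ = (Measure.dirac (⟨B, le_of_lt hAB, le_refl B⟩ : Set.Icc A B)).toSignedMeasure →
      t0 - 2 * (sInt Qδ fun t => min t.1 t0)
        + (sInt Qδ fun t => sInt Qδ fun s => min t.1 s.1) = t0 - B) := by
  have hB : (0:ℝ) ≤ B := (hA.trans hAB).le
  set b : Set.Icc A B := ⟨B, le_of_lt hAB, le_refl B⟩ with hb
  set D : Measure (Set.Icc A B) := Measure.dirac b with hD
  have hmin_t0 : (fun t : Set.Icc A B => min t.1 t0) = fun t => (t.1 : ℝ) :=
    funext fun t => min_eq_left (t.2.2.trans hBt0.le)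
  -- `II D ν` computes the first moment of `ν`
  have hIID : ∀ (ν : Measure (Set.Icc A B)) [IsFiniteMeasure ν],
      II D ν = ∫⁻ s : Set.Icc A B, ENNReal.ofReal s.1 ∂ν := by
    intro ν _
    unfold II
    rw [hD, lintegral_dirac' b (inner_meas ν)]
    exact lintegral_congr fun s => by rw [hb]; simp [min_eq_right s.2.2]
  have hlin : ∀ (ν : Measure (Set.Icc A B)) [IsFiniteMeasure ν],
      ∫ t : Set.Icc A B, (t.1 : ℝ) ∂ν = (II D ν).toReal := by
    intro ν _
    rw [hIID ν]
    exact integral_eq_lintegral_of_nonneg_ae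
      (Filter.Eventually.of_forall fun t => (hA.le.trans t.2.1))
      (measurable_subtype_coe.aestronglyMeasurable)
  have hIIDD : II D D = ENNReal.ofReal B := by
    rw [hIID D, hD, lintegral_dirac' b measurable_subtype_coe.ennreal_ofReal]
  constructor
  · intro Q _
    set P : Measure (Set.Icc A B) := Q.toJordanDecomposition.posPart with hP
    set N : Measure (Set.Icc A B) := Q.toJordanDecomposition.negPart with hN
    rw [hmin_t0]
    have hquad : (sInt Q fun t => sInt Q fun s => min t.1 s.1)
        = ((II P P).toReal - (II P N).toReal) - ((II N P).toReal - (II N N).toReal) := by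
      unfold sInt
      rw [← hP, ← hN]
      have h1 : ∀ (μ : Measure (Set.Icc A B)) [IsFiniteMeasure μ],
          ∫ t : Set.Icc A B, ((∫ s, min t.1 s.1 ∂P) - ∫ s, min t.1 s.1 ∂N) ∂μ
            = (II μ P).toReal - (II μ N).toReal := by
        intro μ _
        rw [integral_sub (integrable_inner hA hB μ P) (integrable_inner hA hB μ N),
          integral_min_eq hA hB μ P, integral_min_eq hA hB μ N]
      rw [h1 P, h1 N]
    rw [hquad]
    unfold sInt
    rw [← hP, ← hN, hlin P, hlin N]
    -- the key positivity inequality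
    have key : 2 * II (D + N) P ≤ II (D + N) (D + N) + II P P := II_key hA _ _
    rw [II_add_left, II_add_left, II_add_right, II_add_right] at key
    have hfin : ∀ (μ ν : Measure (Set.Icc A B)) [IsFiniteMeasure μ] [IsFiniteMeasure ν],
        II μ ν ≠ ∞ := fun μ ν _ _ => II_ne_top μ ν
    have key' : 2 * ((II D P).toReal + (II N P).toReal)
        ≤ (II D D).toReal + (II D N).toReal + ((II N D).toReal + (II N N).toReal)
          + (II P P).toReal := by
      have f12 : II D D + II D N ≠ ⊤ := ENNReal.add_ne_top.2 ⟨hfin D D, hfin D N⟩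
      have f34 : II N D + II N N ≠ ⊤ := ENNReal.add_ne_top.2 ⟨hfin N D, hfin N N⟩
      have f1234 : II D D + II D N + (II N D + II N N) ≠ ⊤ := ENNReal.add_ne_top.2 ⟨f12, f34⟩
      have hRne : II D D + II D N + (II N D + II N N) + II P P ≠ ⊤ :=
        ENNReal.add_ne_top.2 ⟨f1234, hfin P P⟩
      have h2 := ENNReal.toReal_mono hRne key
      rw [ENNReal.toReal_mul, ENNReal.toReal_ofNat,
        ENNReal.toReal_add (hfin D P) (hfin N P),
        ENNReal.toReal_add f1234 (hfin P P),
        ENNReal.toReal_add f12 f34,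
        ENNReal.toReal_add (hfin D D) (hfin D N),
        ENNReal.toReal_add (hfin N D) (hfin N N)] at h2
      exact h2
    have hsymPN : (II P N).toReal = (II N P).toReal := by rw [II_symm hA]
    have hsymDN : (II D N).toReal = (II N D).toReal := by rw [II_symm hA]
    have hDDval : (II D D).toReal = B := by rw [hIIDD, ENNReal.toReal_ofReal hB]
    linarith
  · intro Qδ hQδ
    have hjd : Qδ.toJordanDecomposition =
        ⟨D, 0, MeasureTheory.Measure.MutuallySingular.zero_right⟩ := by
      have h0 : (⟨D, 0, MeasureTheory.Measure.MutuallySingular.zero_right⟩ :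
          JordanDecomposition (Set.Icc A B)).toSignedMeasure = Qδ := by
        show D.toSignedMeasure - (0 : Measure (Set.Icc A B)).toSignedMeasure = Qδ
        rw [Measure.toSignedMeasure_zero, sub_zero, hQδ]
      rw [← h0, JordanDecomposition.toJordanDecomposition_toSignedMeasure]
    have hsInt : ∀ g : Set.Icc A B → ℝ, sInt Qδ g = g b := by
      intro g
      unfold sInt
      rw [hjd]
      simp [hD, integral_dirac]
    rw [hsInt, hsInt, hsInt]
    rw [hb]
    simp only [min_self]
    rw [min_eq_left hBt0.le]
    ring
end

section
/- (Appendix, Brownian motion, linear trend model.) Let 0 < A < B < t₀ and K(t,s) = min(t,s). Then for every finite signed measure Q on [A,B] with ∫_{[A,B]} t Q(dt) = t₀, one has t₀ − 2 ∫_{[A,B]} min(t, t₀) Q(dt) + ∬_{[A,B]×[A,B]} min(t,s) Q(dt)Q(ds) ≥ (t₀/B)(t₀ − B), with equality for Q = (t₀/B) δ_B. In other words, in the model y(t) = θ t + ε(t) with Brownian motion error observed on [A,B], the BLUP of y(t₀) is ŷ(t₀) = (t₀/B) y(B) and its mean squared error is (t₀/B)(t₀ − B). -/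
open MeasureTheory
open scoped ENNReal NNReal

noncomputable def gfun (A B : ℝ) (u : ℝ) (t : Set.Icc A B) : ℝ :=
  (if u < t.1 then 1 else 0) - t.1 / B

lemma gfun_meas (A B : ℝ) :
    Measurable (fun p : ℝ × Set.Icc A B => gfun A B p.1 p.2) := by
  unfold gfun
  exact (Measurable.ite (measurableSet_lt measurable_fst
    (measurable_subtype_coe.comp measurable_snd)) measurable_const measurable_const).sub
    ((measurable_subtype_coe.comp measurable_snd).div_const B)

lemma gfun_bound {A B : ℝ} (hA : 0 < A) (u : ℝ) (t : Set.Icc A B) :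
    |gfun A B u t| ≤ 2 := by
  have h1 : (0:ℝ) < t.1 := lt_of_lt_of_le hA t.2.1
  have h2 : t.1 ≤ B := t.2.2
  have hB : (0:ℝ) < B := lt_of_lt_of_le h1 h2
  have h3 : t.1 / B ≤ 1 := (div_le_one hB).2 h2
  have h4 : 0 ≤ t.1 / B := div_nonneg h1.le hB.le
  unfold gfun
  split_ifs <;> rw [abs_le] <;> constructor <;> nlinarith

lemma restr_fin (B : ℝ) : IsFiniteMeasure (volume.restrict (Set.Ioc (0:ℝ) B)) :=
  ⟨by rw [Measure.restrict_apply_univ]; exact measure_Ioc_lt_top⟩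

lemma intg_bdd {X : Type*} [MeasurableSpace X] (m : Measure X) [IsFiniteMeasure m]
    {f : X → ℝ} (hm : AEStronglyMeasurable f m) {C : ℝ} (hb : ∀ x, |f x| ≤ C) :
    Integrable f m :=
  Integrable.mono' (integrable_const C) hm
    (Filter.Eventually.of_forall fun x => by simpa [Real.norm_eq_abs] using hb x)

lemma norm_int_le {X : Type*} [MeasurableSpace X] (m : Measure X) [IsFiniteMeasure m]
    {f : X → ℝ} {C : ℝ} (hb : ∀ x, |f x| ≤ C) :
    |∫ x, f x ∂m| ≤ C * (m Set.univ).toReal := by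
  have := norm_integral_le_of_norm_le_const (f := f) (μ := m) (C := C)
    (Filter.Eventually.of_forall fun u => by simpa [Real.norm_eq_abs] using hb u)
  simpa [Real.norm_eq_abs, Measure.real] using this

lemma norm_setInt_le {B C : ℝ} (hB : 0 ≤ B) (f : ℝ → ℝ) (hb : ∀ u, |f u| ≤ C) :
    |∫ u in Set.Ioc 0 B, f u| ≤ C * B := by
  haveI := restr_fin B
  have := norm_int_le (volume.restrict (Set.Ioc (0:ℝ) B)) hb
  simpa [Measure.restrict_apply_univ, Real.volume_Ioc,
    ENNReal.toReal_ofReal hB] using this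

lemma ind_integrable (B c : ℝ) :
    IntegrableOn (fun u => if u < c then (1:ℝ) else 0) (Set.Ioc 0 B) := by
  have : (fun u : ℝ => if u < c then (1:ℝ) else 0) = (Set.Iio c).indicator 1 := by
    ext u; simp [Set.indicator_apply, Set.mem_Iio]
  rw [this]
  apply (integrable_indicator_iff measurableSet_Iio).2
  rw [IntegrableOn, Measure.restrict_restrict measurableSet_Iio]
  exact integrableOn_const ((measure_mono Set.inter_subset_right).trans_lt
    measure_Ioc_lt_top).ne

lemma ind_integral {B c : ℝ} (hc : 0 < c) (hcB : c ≤ B) :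
    ∫ u in Set.Ioc 0 B, (if u < c then (1:ℝ) else 0) = c := by
  have : (fun u : ℝ => if u < c then (1:ℝ) else 0) = (Set.Iio c).indicator 1 := by
    ext u; simp [Set.indicator_apply, Set.mem_Iio]
  rw [this, setIntegral_indicator measurableSet_Iio]
  have hs : Set.Ioc 0 B ∩ Set.Iio c = Set.Ioo 0 c := by
    ext u; simp only [Set.mem_inter_iff, Set.mem_Ioc, Set.mem_Iio, Set.mem_Ioo]
    constructor
    · rintro ⟨⟨h1, _⟩, h3⟩; exact ⟨h1, h3⟩
    · rintro ⟨h1, h2⟩; exact ⟨⟨h1, le_trans h2.le hcB⟩, h2⟩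
  rw [hs]
  simp [Real.volume_Ioo, ENNReal.toReal_ofReal hc.le, hc.le]

lemma kernel_rep {A B : ℝ} (hA : 0 < A) (t s : Set.Icc A B) :
    ∫ u in Set.Ioc 0 B, gfun A B u t * gfun A B u s
      = min t.1 s.1 - t.1 * s.1 / B := by
  have htpos : (0:ℝ) < t.1 := lt_of_lt_of_le hA t.2.1
  have hspos : (0:ℝ) < s.1 := lt_of_lt_of_le hA s.2.1
  have htB : t.1 ≤ B := t.2.2
  have hsB : s.1 ≤ B := s.2.2
  have hB : (0:ℝ) < B := lt_of_lt_of_le htpos htB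
  have hpt : (fun u : ℝ => gfun A B u t * gfun A B u s)
      = fun u => ((if u < min t.1 s.1 then (1:ℝ) else 0)
        - (s.1 / B) * (if u < t.1 then 1 else 0))
        - ((t.1 / B) * (if u < s.1 then 1 else 0) - t.1 * s.1 / (B * B)) := by
    funext u
    have hmin : (if u < min t.1 s.1 then (1:ℝ) else 0)
        = (if u < t.1 then (1:ℝ) else 0) * (if u < s.1 then 1 else 0) := by
      by_cases h1 : u < t.1 <;> by_cases h2 : u < s.1 <;>
        simp [lt_min_iff, h1, h2]
    rw [hmin]; unfold gfun; ring
  rw [hpt]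
  have i1 : IntegrableOn (fun u : ℝ => if u < min t.1 s.1 then (1:ℝ) else 0)
      (Set.Ioc 0 B) := ind_integrable B _
  have i2 : IntegrableOn (fun u : ℝ => (s.1 / B) * (if u < t.1 then (1:ℝ) else 0))
      (Set.Ioc 0 B) := (ind_integrable B _).const_mul _
  have i3 : IntegrableOn (fun u : ℝ => (t.1 / B) * (if u < s.1 then (1:ℝ) else 0))
      (Set.Ioc 0 B) := (ind_integrable B _).const_mul _
  have i4 : IntegrableOn (fun _ : ℝ => t.1 * s.1 / (B * B)) (Set.Ioc 0 B) :=
    integrableOn_const measure_Ioc_lt_top.ne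
  have I12 : Integrable (fun u : ℝ => (if u < min t.1 s.1 then (1:ℝ) else 0)
      - (s.1 / B) * (if u < t.1 then 1 else 0)) (volume.restrict (Set.Ioc 0 B)) := i1.sub i2
  have I34 : Integrable (fun u : ℝ => (t.1 / B) * (if u < s.1 then (1:ℝ) else 0)
      - t.1 * s.1 / (B * B)) (volume.restrict (Set.Ioc 0 B)) := i3.sub i4
  rw [integral_sub I12 I34, integral_sub i1 i2, integral_sub i3 i4,
    integral_const_mul, integral_const_mul, ind_integral (lt_min htpos hspos)
    (min_le_of_left_le htB), ind_integral htpos htB, ind_integral hspos hsB,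
    setIntegral_const]
  simp only [Measure.real, Real.volume_Ioc, smul_eq_mul, sub_zero, ENNReal.toReal_ofReal hB.le]
  field_simp
  ring

lemma swap_g {A B : ℝ} (hA : 0 < A) (m : Measure (Set.Icc A B)) [IsFiniteMeasure m]
    (c : ℝ → ℝ) (hc : StronglyMeasurable c) (C : ℝ) (hcb : ∀ u, |c u| ≤ C) :
    ∫ t, (∫ u in Set.Ioc 0 B, gfun A B u t * c u) ∂m
      = ∫ u in Set.Ioc 0 B, (∫ t, gfun A B u t ∂m) * c u := by
  haveI := restr_fin B
  have hC : 0 ≤ C := le_trans (abs_nonneg _) (hcb 0)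
  have hmeas : Measurable (fun p : Set.Icc A B × ℝ => gfun A B p.2 p.1 * c p.2) :=
    ((gfun_meas A B).comp measurable_swap).mul (hc.measurable.comp measurable_snd)
  have hint : Integrable (Function.uncurry fun (t : Set.Icc A B) (u : ℝ) =>
      gfun A B u t * c u) (m.prod (volume.restrict (Set.Ioc 0 B))) := by
    refine Integrable.mono' (integrable_const (2 * C))
      hmeas.aestronglyMeasurable (Filter.Eventually.of_forall fun p => ?_)
    obtain ⟨t, u⟩ := p
    rw [Function.uncurry_apply_pair, Real.norm_eq_abs, abs_mul]
    exact mul_le_mul (gfun_bound hA _ _) (hcb _) (abs_nonneg _) (by norm_num)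
  rw [integral_integral_swap hint]
  exact integral_congr_ae (Filter.Eventually.of_forall fun u => integral_mul_const _ _)

lemma cfun_sm {A B : ℝ} (m : Measure (Set.Icc A B)) [IsFiniteMeasure m] :
    StronglyMeasurable (fun u : ℝ => ∫ t, gfun A B u t ∂m) :=
  (gfun_meas A B).stronglyMeasurable.integral_prod_right'

lemma cfun_bound {A B : ℝ} (hA : 0 < A) (m : Measure (Set.Icc A B)) [IsFiniteMeasure m]
    (u : ℝ) : |∫ t, gfun A B u t ∂m| ≤ 2 * (m Set.univ).toReal :=
  norm_int_le m (fun t => gfun_bound hA u t)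

lemma gfun_sm_fixed {A B : ℝ} (t : Set.Icc A B) :
    StronglyMeasurable (fun u : ℝ => gfun A B u t) :=
  ((gfun_meas A B).comp (measurable_id.prodMk measurable_const)).stronglyMeasurable

lemma inner_rep {A B : ℝ} (hA : 0 < A) (m : Measure (Set.Icc A B)) [IsFiniteMeasure m]
    (t : Set.Icc A B) :
    ∫ s, min t.1 s.1 ∂m
      = (∫ u in Set.Ioc 0 B, (∫ s, gfun A B u s ∂m) * gfun A B u t)
        + (∫ s, s.1 ∂m) * (t.1 / B) := by
  have htpos : (0:ℝ) < t.1 := lt_of_lt_of_le hA t.2.1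
  have hB : (0:ℝ) < B := lt_of_lt_of_le htpos t.2.2
  have hpt : ∀ s : Set.Icc A B, min t.1 s.1
      = (∫ u in Set.Ioc 0 B, gfun A B u s * gfun A B u t) + s.1 * (t.1 / B) := by
    intro s
    rw [kernel_rep hA s t, min_comm]
    field_simp
    ring
  calc ∫ s, min t.1 s.1 ∂m
      = ∫ s, ((∫ u in Set.Ioc 0 B, gfun A B u s * gfun A B u t) + s.1 * (t.1 / B)) ∂m := by
        exact integral_congr_ae (Filter.Eventually.of_forall hpt)
    _ = (∫ s, (∫ u in Set.Ioc 0 B, gfun A B u s * gfun A B u t) ∂m)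
          + (∫ s, s.1 ∂m) * (t.1 / B) := by
        rw [integral_add ?i1 ?i2, integral_mul_const]
        case i1 =>
          refine intg_bdd m ?_ (C := 4 * B) ?_
          · have hmeas : Measurable (fun p : Set.Icc A B × ℝ =>
                gfun A B p.2 p.1 * gfun A B p.2 t) :=
              ((gfun_meas A B).comp measurable_swap).mul
                ((gfun_meas A B).comp (measurable_snd.prodMk measurable_const))
            exact (hmeas.stronglyMeasurable.integral_prod_right').aestronglyMeasurable
          · intro s
            refine norm_setInt_le hB.le _ fun u => ?_
            rw [abs_mul]
            calc |gfun A B u s| * |gfun A B u t| ≤ 2 * 2 :=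
                mul_le_mul (gfun_bound hA _ _) (gfun_bound hA _ _) (abs_nonneg _) (by norm_num)
              _ = 4 := by norm_num
        case i2 =>
          refine Integrable.mul_const ?_ _
          refine intg_bdd m measurable_subtype_coe.aestronglyMeasurable (C := B) fun s => ?_
          rw [abs_of_pos (lt_of_lt_of_le hA s.2.1)]; exact s.2.2
    _ = (∫ u in Set.Ioc 0 B, (∫ s, gfun A B u s ∂m) * gfun A B u t)
          + (∫ s, s.1 ∂m) * (t.1 / B) := by
        rw [swap_g hA m (fun u => gfun A B u t) (gfun_sm_fixed t) 2
          (fun u => gfun_bound hA u t)]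

lemma key_ineq {A B t0 : ℝ} (hA : 0 < A) (hAB : A < B)
    (μ ν : Measure (Set.Icc A B)) [IsFiniteMeasure μ] [IsFiniteMeasure ν]
    (hQ : (∫ t, t.1 ∂μ) - (∫ t, t.1 ∂ν) = t0) :
    t0 * t0 / B ≤
      (∫ t, ((∫ s, min t.1 s.1 ∂μ) - ∫ s, min t.1 s.1 ∂ν) ∂μ)
        - ∫ t, ((∫ s, min t.1 s.1 ∂μ) - ∫ s, min t.1 s.1 ∂ν) ∂ν := by
  haveI := restr_fin B
  have hB : (0:ℝ) < B := hA.trans hAB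
  set c : ℝ → ℝ := fun u => (∫ s, gfun A B u s ∂μ) - ∫ s, gfun A B u s ∂ν with hc
  have hcsm : StronglyMeasurable c := (cfun_sm μ).sub (cfun_sm ν)
  set M : ℝ := 2 * (μ Set.univ).toReal + 2 * (ν Set.univ).toReal with hM
  have hcb : ∀ u, |c u| ≤ M := by
    intro u
    calc |c u| ≤ |∫ s, gfun A B u s ∂μ| + |∫ s, gfun A B u s ∂ν| := abs_sub _ _
      _ ≤ M := add_le_add (cfun_bound hA μ u) (cfun_bound hA ν u)
  -- integrability of u ↦ (∫ gfun dm) * c u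
  have integ : ∀ (m : Measure (Set.Icc A B)) (_ : IsFiniteMeasure m),
      Integrable (fun u => (∫ t, gfun A B u t ∂m) * c u)
        (volume.restrict (Set.Ioc 0 B)) := by
    intro m hm
    refine intg_bdd _ (((cfun_sm m).mul hcsm).aestronglyMeasurable)
      (C := 2 * (m Set.univ).toReal * M) fun u => ?_
    rw [abs_mul]
    exact mul_le_mul (cfun_bound hA m u) (hcb u) (abs_nonneg _)
      (by positivity)
  have hF : ∀ t : Set.Icc A B, ((∫ s, min t.1 s.1 ∂μ) - ∫ s, min t.1 s.1 ∂ν)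
      = (∫ u in Set.Ioc 0 B, gfun A B u t * c u) + t.1 * (t0 / B) := by
    intro t
    rw [inner_rep hA μ t, inner_rep hA ν t]
    have iμ : Integrable (fun u => (∫ s, gfun A B u s ∂μ) * gfun A B u t)
        (volume.restrict (Set.Ioc 0 B)) := by
      refine intg_bdd _ (((cfun_sm μ).mul (gfun_sm_fixed t)).aestronglyMeasurable)
        (C := 2 * (μ Set.univ).toReal * 2) fun u => ?_
      rw [abs_mul]
      exact mul_le_mul (cfun_bound hA μ u) (gfun_bound hA u t) (abs_nonneg _) (by positivity)
    have iν : Integrable (fun u => (∫ s, gfun A B u s ∂ν) * gfun A B u t)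
        (volume.restrict (Set.Ioc 0 B)) := by
      refine intg_bdd _ (((cfun_sm ν).mul (gfun_sm_fixed t)).aestronglyMeasurable)
        (C := 2 * (ν Set.univ).toReal * 2) fun u => ?_
      rw [abs_mul]
      exact mul_le_mul (cfun_bound hA ν u) (gfun_bound hA u t) (abs_nonneg _) (by positivity)
    have hcongr : (fun u => gfun A B u t * c u)
        = fun u => (∫ s, gfun A B u s ∂μ) * gfun A B u t
            - (∫ s, gfun A B u s ∂ν) * gfun A B u t := by
      funext u; rw [hc]; ring
    rw [hcongr, integral_sub iμ iν, ← hQ]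
    ring
  have hout : ∀ (m : Measure (Set.Icc A B)) (_ : IsFiniteMeasure m),
      ∫ t, ((∫ s, min t.1 s.1 ∂μ) - ∫ s, min t.1 s.1 ∂ν) ∂m
        = (∫ u in Set.Ioc 0 B, (∫ t, gfun A B u t ∂m) * c u)
          + (∫ t, t.1 ∂m) * (t0 / B) := by
    intro m hm
    calc ∫ t, ((∫ s, min t.1 s.1 ∂μ) - ∫ s, min t.1 s.1 ∂ν) ∂m
        = ∫ t, ((∫ u in Set.Ioc 0 B, gfun A B u t * c u) + t.1 * (t0 / B)) ∂m :=
          integral_congr_ae (Filter.Eventually.of_forall hF)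
      _ = (∫ t, (∫ u in Set.Ioc 0 B, gfun A B u t * c u) ∂m)
            + (∫ t, t.1 ∂m) * (t0 / B) := by
          rw [integral_add ?i1 ?i2, integral_mul_const]
          case i1 =>
            refine intg_bdd m ?_ (C := 2 * M * B) ?_
            · have hmeas : Measurable (fun p : Set.Icc A B × ℝ =>
                  gfun A B p.2 p.1 * c p.2) :=
                ((gfun_meas A B).comp measurable_swap).mul
                  (hcsm.measurable.comp measurable_snd)
              exact (hmeas.stronglyMeasurable.integral_prod_right').aestronglyMeasurable
            · intro t
              refine norm_setInt_le hB.le _ fun u => ?_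
              rw [abs_mul]
              exact mul_le_mul (gfun_bound hA _ _) (hcb u) (abs_nonneg _) (by norm_num)
          case i2 =>
            refine Integrable.mul_const ?_ _
            refine intg_bdd m measurable_subtype_coe.aestronglyMeasurable (C := B)
              fun s => ?_
            rw [abs_of_pos (lt_of_lt_of_le hA s.2.1)]; exact s.2.2
      _ = (∫ u in Set.Ioc 0 B, (∫ t, gfun A B u t ∂m) * c u)
            + (∫ t, t.1 ∂m) * (t0 / B) := by
          rw [swap_g hA m c hcsm M hcb]
  rw [hout μ ‹_›, hout ν ‹_›]
  have e1 : (∫ u in Set.Ioc 0 B, (∫ t, gfun A B u t ∂μ) * c u)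
      - (∫ u in Set.Ioc 0 B, (∫ t, gfun A B u t ∂ν) * c u)
      = ∫ u in Set.Ioc 0 B, c u * c u := by
    rw [← integral_sub (integ μ ‹_›) (integ ν ‹_›)]
    exact integral_congr_ae (Filter.Eventually.of_forall fun u => by rw [hc]; ring)
  have e2 : 0 ≤ ∫ u in Set.Ioc 0 B, c u * c u :=
    integral_nonneg fun u => mul_self_nonneg _
  have e3 : (∫ t, t.1 ∂μ) * (t0 / B) - (∫ t, t.1 ∂ν) * (t0 / B) = t0 * t0 / B := by
    rw [← hQ]; ring
  linarith

lemma sInt_smul_measure {X : Type*} [MeasurableSpace X] (m : Measure X) [IsFiniteMeasure m]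
    {r : ℝ} (hr : 0 ≤ r) (g : X → ℝ) :
    sInt (r • m.toSignedMeasure) g = r * ∫ x, g x ∂m := by
  have hj : (m.toSignedMeasure).toJordanDecomposition
      = ⟨m, 0, Measure.MutuallySingular.zero_right⟩ := by
    apply SignedMeasure.toJordanDecomposition_eq
    show m.toSignedMeasure = m.toSignedMeasure - (0 : Measure X).toSignedMeasure
    rw [Measure.toSignedMeasure_zero, sub_zero]
  have h2 : (r • m.toSignedMeasure).toJordanDecomposition
      = r • (⟨m, 0, Measure.MutuallySingular.zero_right⟩ : JordanDecomposition X) := by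
    rw [MeasureTheory.SignedMeasure.toJordanDecomposition_smul_real, hj]
  unfold sInt
  rw [h2, JordanDecomposition.real_smul_posPart_nonneg _ _ hr,
    JordanDecomposition.real_smul_negPart_nonneg _ _ hr]
  show (∫ x, g x ∂(r.toNNReal • m)) - ∫ x, g x ∂(r.toNNReal • (0 : Measure X)) = _
  rw [smul_zero, integral_zero_measure]
  have : r.toNNReal • m = ((r.toNNReal : ℝ≥0∞)) • m := rfl
  rw [this, integral_smul_measure]
  simp [ENNReal.coe_toReal, Real.coe_toNNReal r hr, sub_zero]

/-- Appendix, Brownian motion, linear trend model.  For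
`0 < A < B < t₀` and `K(t,s) = min(t,s)`, every finite signed measure `Q` on `[A,B]`
with `∫ t Q(dt) = t₀` satisfies
`t₀ − 2∫ min(t,t₀) Q(dt) + ∬ min(t,s) Q(dt)Q(ds) ≥ (t₀/B)(t₀ − B)`, with equality for
`Q = (t₀/B) δ_B`: the BLUP of `y(t₀)` in the model `y(t) = θt + ε(t)` is `(t₀/B) y(B)`
with mean squared error `(t₀/B)(t₀ − B)`. -/
theorem brownian_linear_trend_blup (A B t0 : ℝ)
    (hA : 0 < A) (hAB : A < B) (hBt0 : B < t0) :
    (∀ Q : SignedMeasure (Set.Icc A B), (sInt Q fun t => t.1) = t0 →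
      (t0 / B) * (t0 - B) ≤ t0 - 2 * (sInt Q fun t => min t.1 t0)
        + (sInt Q fun t => sInt Q fun s => min t.1 s.1)) ∧
    (∀ Qδ : SignedMeasure (Set.Icc A B),
      Qδ = (t0 / B) •
        (Measure.dirac (⟨B, le_of_lt hAB, le_refl B⟩ : Set.Icc A B)).toSignedMeasure →
      t0 - 2 * (sInt Qδ fun t => min t.1 t0)
        + (sInt Qδ fun t => sInt Qδ fun s => min t.1 s.1) = (t0 / B) * (t0 - B)) := by
  have hB : (0:ℝ) < B := hA.trans hAB
  constructor
  · intro Q hQ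
    have hmin : (sInt Q fun t => min t.1 t0) = t0 := by
      have h : (fun t : Set.Icc A B => min t.1 t0) = fun t => t.1 := by
        funext t; exact min_eq_left (t.2.2.trans hBt0.le)
      rw [h, hQ]
    rw [hmin]
    have hq' : (∫ t, t.1 ∂Q.toJordanDecomposition.posPart)
        - (∫ t, t.1 ∂Q.toJordanDecomposition.negPart) = t0 := hQ
    have key := key_ineq hA hAB Q.toJordanDecomposition.posPart
      Q.toJordanDecomposition.negPart hq'
    have heq : (sInt Q fun t => sInt Q fun s => min t.1 s.1)
        = (∫ t, ((∫ s, min t.1 s.1 ∂Q.toJordanDecomposition.posPart)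
              - ∫ s, min t.1 s.1 ∂Q.toJordanDecomposition.negPart)
            ∂Q.toJordanDecomposition.posPart)
          - ∫ t, ((∫ s, min t.1 s.1 ∂Q.toJordanDecomposition.posPart)
              - ∫ s, min t.1 s.1 ∂Q.toJordanDecomposition.negPart)
            ∂Q.toJordanDecomposition.negPart := rfl
    rw [heq]
    have harith : (t0 / B) * (t0 - B) = t0 * t0 / B - t0 := by
      field_simp
    linarith
  · intro Qδ hQδ
    subst hQδ
    have hr : 0 ≤ t0 / B := div_nonneg (hB.trans hBt0).le hB.le
    simp only [sInt_smul_measure _ hr, integral_dirac]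
    rw [min_self, min_eq_left hBt0.le]
    field_simp
    ring
end
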